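/- arXiv:1409.5056 — 3 statements merged into one kernel-verified Lean document; each statement's English description precedes it below -/
import Mathlib

section
/- If there exists an η-generating set, then there exists a real number c > 0 such that h(u) < c for every unit vector u ∈ ℝ². -/
open Filter Set

noncomputable section

/-- The plane `ℝ²`. -/
abbrev R2 := EuclideanSpace ℝ (Fin 2)

/-- The embedding of `ℤ²` into `ℝ²`. -/
def toR2 (p : ℤ × ℤ) : R2 := (WithLp.equiv 2 (Fin 2 → ℝ)).symm ![(p.1 : ℝ), (p.2 : ℝ)]

def e1 : R2 := (WithLp.equiv 2 (Fin 2 → ℝ)).symm ![1, 0]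
def e2 : R2 := (WithLp.equiv 2 (Fin 2 → ℝ)).symm ![0, 1]

variable {A : Type*}

/-- The translate `Tⁿη`. -/
def Tr (η : ℤ × ℤ → A) (n : ℤ × ℤ) : ℤ × ℤ → A := fun x => η (x + n)

/-- The number of distinct `η`-colorings of a set `S ⊆ ℤ²`. -/
def colorCount (η : ℤ × ℤ → A) (S : Set (ℤ × ℤ)) : ℕ :=
  Set.ncard {f : S → A | ∃ n : ℤ × ℤ, ∀ x : S, f x = η ((x : ℤ × ℤ) + n)}

/-- The integer points of a subset of the plane. -/
def latticePts (K : Set R2) : Set (ℤ × ℤ) := {p | toR2 p ∈ K}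

/-- The complexity `P_η(K)` for `K ⊆ ℝ²`. -/
def Pc (η : ℤ × ℤ → A) (K : Set R2) : ℕ := colorCount η (latticePts K)

/-- The rectangle complexity `P_η(n,k)`. -/
def Prect (η : ℤ × ℤ → A) (n k : ℕ) : ℕ :=
  colorCount η {p : ℤ × ℤ | 0 ≤ p.1 ∧ p.1 < (n : ℤ) ∧ 0 ≤ p.2 ∧ p.2 < (k : ℤ)}

/-- The `t`-neighborhood `[0, su]^(t)` of the segment `[0, su]`. -/
def segNbhd (u : R2) (s t : ℝ) : Set R2 :=
  {v | ∃ w ∈ segment ℝ (0 : R2) (s • u), dist v w < t}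

/-- The directional entropy `h(u)`. -/
def dirEnt (η : ℤ × ℤ → A) (u : R2) : EReal :=
  ⨆ t : Set.Ioi (0 : ℝ),
    Filter.limsup (fun s : ℝ => ((Real.log (Pc η (segNbhd u s (t : ℝ))) / s : ℝ) : EReal))
      Filter.atTop

/-- `f` agrees on `S` with some translate of `η`. -/
def IsColoring (η : ℤ × ℤ → A) (S : Set (ℤ × ℤ)) (f : ℤ × ℤ → A) : Prop :=
  ∃ n : ℤ × ℤ, ∀ x ∈ S, f x = η (x + n)

/-- The `η`-coloring `f` of `S` extends uniquely to an `η`-coloring of `T`. -/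
def ExtendsUniquely (η : ℤ × ℤ → A) (S T : Set (ℤ × ℤ)) (f : ℤ × ℤ → A) : Prop :=
  (∃ g, IsColoring η T g ∧ ∀ x ∈ S, g x = f x) ∧
    ∀ g g', IsColoring η T g → IsColoring η T g' →
      (∀ x ∈ S, g x = f x) → (∀ x ∈ S, g' x = f x) → ∀ x ∈ T, g x = g' x

/-- `S = conv(S) ∩ ℤ²`. -/
def IsLatticeConvex (S : Set (ℤ × ℤ)) : Prop :=
  ∀ p : ℤ × ℤ, toR2 p ∈ convexHull ℝ (toR2 '' S) → p ∈ S

/-- `x` is `η`-generated by `S`. -/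
def IsGenerated (η : ℤ × ℤ → A) (S : Set (ℤ × ℤ)) (x : ℤ × ℤ) : Prop :=
  ∀ f : ℤ × ℤ → A, IsColoring η (S \ {x}) f → ExtendsUniquely η (S \ {x}) S f

/-- `S` is an `η`-generating set. -/
def IsGeneratingSet (η : ℤ × ℤ → A) (S : Set (ℤ × ℤ)) : Prop :=
  S.Finite ∧ S.Nonempty ∧ IsLatticeConvex S ∧
    ∀ x ∈ S, toR2 x ∈ frontier (convexHull ℝ (toR2 '' S)) → IsGenerated η S x

/-- For `v = (v₁, v₂)`, `perp v = (v₂, -v₁)`. -/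
def perp (v : R2) : R2 := (WithLp.equiv 2 (Fin 2 → ℝ)).symm ![v 1, -(v 0)]

/-- `E_v(S)`: the integer points of the edge of `S` in direction `v`. -/
def edgeSet (v : R2) (S : Set (ℤ × ℤ)) : Set (ℤ × ℤ) :=
  {x ∈ S | ∀ y ∈ S, (inner ℝ (toR2 y) (perp v) : ℝ) ≤ inner ℝ (toR2 x) (perp v)}

/-- `x` is an endpoint of `E_v(S)`. -/
def IsEndpoint (v : R2) (S : Set (ℤ × ℤ)) (x : ℤ × ℤ) : Prop :=
  x ∈ edgeSet v S ∧ toR2 x ∉ convexHull ℝ (toR2 '' (edgeSet v S \ {x}))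

/-- `S` is `v`-balanced for `η`. -/
def IsBalanced (η : ℤ × ℤ → A) (v : R2) (S : Set (ℤ × ℤ)) : Prop :=
  S.Finite ∧ IsLatticeConvex S ∧ S ≠ edgeSet v S ∧
    (∀ x, IsEndpoint v S x → IsGenerated η S x) ∧
    colorCount η S < colorCount η (S \ edgeSet v S) + (edgeSet v S).ncard ∧
    ∀ w : R2, ({x ∈ S | ∃ c : ℝ, toR2 x = w + c • v}).Nonempty →
      (edgeSet v S).ncard ≤ ({x ∈ S | ∃ c : ℝ, toR2 x = w + c • v}).ncard + 1

/-- `J_{T,v,S}`. -/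
def Jset (v : R2) (S T : Set (ℤ × ℤ)) : Set (ℤ × ℤ) :=
  {j | ((fun x => x + j) '' S) \ T = (fun x => x + j) '' edgeSet v S}

/-- `J_{T,v,S,p}`: `J_{T,v,S}` with the `p` points nearest each endpoint removed. -/
def JsetP (v : R2) (S T : Set (ℤ × ℤ)) (p : ℕ) : Set (ℤ × ℤ) :=
  {j ∈ Jset v S T |
    p ≤ ({j' ∈ Jset v S T | (inner ℝ (toR2 j') v : ℝ) < inner ℝ (toR2 j) v}).ncard ∧
    p ≤ ({j' ∈ Jset v S T | (inner ℝ (toR2 j) v : ℝ) < inner ℝ (toR2 j') v}).ncard}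

/-- `ext¹_{v,S,p}(T)`. -/
def ext1 (v : R2) (S : Set (ℤ × ℤ)) (p : ℕ) (T : Set (ℤ × ℤ)) : Set (ℤ × ℤ) :=
  T ∪ ⋃ j ∈ JsetP v S T p, (fun x => x + j) '' S

/-- `ext^m_{v,S,p}(T)`. -/
def extN (v : R2) (S : Set (ℤ × ℤ)) (p : ℕ) (m : ℕ) (T : Set (ℤ × ℤ)) : Set (ℤ × ℤ) :=
  (ext1 v S p)^[m] T

/-- The border `∂_{v,S,p}(T)`. -/
def border (v : R2) (S : Set (ℤ × ℤ)) (p : ℕ) (T : Set (ℤ × ℤ)) : Set (ℤ × ℤ) :=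
  ⋃ j ∈ JsetP v S T p, (fun x => x + j) '' (S \ edgeSet v S)

/-- The integer points of the rectangle `[a,b] × [c,d]`. -/
def rect (a b c d : ℤ) : Set (ℤ × ℤ) := {p | a ≤ p.1 ∧ p.1 ≤ b ∧ c ≤ p.2 ∧ p.2 ≤ d}

/-- `f` is (the restriction to `T` of) an `(S,η)`-coloring. -/
def IsSColoringOf (η : ℤ × ℤ → A) (S T : Set (ℤ × ℤ)) (f : ℤ × ℤ → A) : Prop :=
  ∃ g : ℤ × ℤ → A, (∀ x ∈ T, g x = f x) ∧ ∀ j : ℤ × ℤ, IsColoring η ((fun x => x + j) '' S) g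

/-- `f|_R` extends uniquely to an `(S,η)`-coloring of `T`. -/
def ExtendsUniquelyS (η : ℤ × ℤ → A) (S R T : Set (ℤ × ℤ)) (f : ℤ × ℤ → A) : Prop :=
  (∃ g, IsSColoringOf η S T g ∧ ∀ x ∈ R, g x = f x) ∧
    ∀ g g', IsSColoringOf η S T g → IsSColoringOf η S T g' →
      (∀ x ∈ R, g x = f x) → (∀ x ∈ R, g' x = f x) → ∀ x ∈ T, g x = g' x

/-- `f` is vertically periodic on `X` with period `p`. -/
def VertPeriodicOn (f : ℤ × ℤ → A) (X : Set (ℤ × ℤ)) (p : ℤ) : Prop :=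
  ∀ q : ℤ × ℤ, q ∈ X → q + (0, p) ∈ X → f (q + (0, p)) = f q

/-- The thickness `τ_u(K)` of `K` in direction `u`. -/
def thickness (u : R2) (K : Set R2) : ℝ :=
  sSup {τ : ℝ | 0 ≤ τ ∧ ∃ n : ℤ × ℤ, (fun v => v + toR2 n) '' segment ℝ (0 : R2) (τ • u) ⊆ K}

/-- One-dimensional word complexity `P_α(n)`. -/
def wordCount (α : ℤ → A) (n : ℕ) : ℕ :=
  Set.ncard {w : Fin n → A | ∃ m : ℤ, ∀ j : Fin n, w j = α (m + (j : ℕ))}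

section Topological

variable [TopologicalSpace A]

/-- The orbit closure `X_η` in the product topology. -/
def Xeta (η : ℤ × ℤ → A) : Set (ℤ × ℤ → A) := closure {g | ∃ n : ℤ × ℤ, g = Tr η n}

/-- A line `ℓ ⊆ ℝ²` is expansive for `X_η`. -/
def IsExpansiveLine (η : ℤ × ℤ → A) (ℓ : Set R2) : Prop :=
  ∃ r > 0, ∀ x ∈ Xeta η, ∀ y ∈ Xeta η,
    (∀ n : ℤ × ℤ, Metric.infDist (toR2 n) ℓ < r → x n = y n) → x = y

/-- The line through the origin in direction `u`. -/
def lineThrough (u : R2) : Set R2 := {v | ∃ c : ℝ, v = c • u}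

open Classical in
/-- The metric `ρ` on `𝒜^{ℤ²}`. -/
def rho (x y : ℤ × ℤ → A) : ℝ :=
  if x = y then 0
  else (2 : ℝ) ^ (-(sInf {r : ℝ | ∃ m : ℤ × ℤ, x m ≠ y m ∧ ‖toR2 m‖ = r}))

/-- The covering number `N_T(E, ε)`. -/
def Ncount (η : ℤ × ℤ → A) (E : Set R2) (ε : ℝ) : ℕ :=
  sInf {c : ℕ | ∃ Y : Finset (ℤ × ℤ → A), Y.card = c ∧ ↑Y ⊆ Xeta η ∧
    ∀ x ∈ Xeta η, ∃ y ∈ Y, ∀ n : ℤ × ℤ, toR2 n ∈ E → rho (Tr x n) (Tr y n) < ε}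

end Topological

end



/-! ### Auxiliary lemmas for `stmt4` -/

section Stmt4Aux

open scoped RealInnerProductSpace

variable {A : Type*}

lemma aux_toR2_apply0 (p : ℤ × ℤ) : toR2 p 0 = p.1 := by simp [toR2]

lemma aux_toR2_apply1 (p : ℤ × ℤ) : toR2 p 1 = p.2 := by simp [toR2]

lemma aux_abs_coord_le (x : R2) (i : Fin 2) : |x i| ≤ ‖x‖ := by
  rw [EuclideanSpace.norm_eq, ← Real.sqrt_sq_eq_abs]
  apply Real.sqrt_le_sqrt
  have := Finset.single_le_sum (f := fun j => ‖x j‖ ^ 2) (fun j _ => by positivity)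
    (Finset.mem_univ i)
  simpa [Real.norm_eq_abs, sq_abs] using this

lemma aux_inner_toR2 (p q : ℤ × ℤ) :
    ⟪toR2 p, toR2 q⟫ = (p.1 * q.1 + p.2 * q.2 : ℤ) := by
  simp [PiLp.inner_apply, Fin.sum_univ_two, aux_toR2_apply0, aux_toR2_apply1]; ring

lemma aux_mem_frontier_of_max {S : Set (ℤ × ℤ)} (hfin : S.Finite) {x₀ : ℤ × ℤ} (hx : x₀ ∈ S)
    (w : R2) (hw : w ≠ 0)
    (hmax : ∀ y ∈ S, ⟪toR2 y, w⟫ ≤ ⟪toR2 x₀, w⟫) :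
    toR2 x₀ ∈ frontier (convexHull ℝ (toR2 '' S)) := by
  have hC : IsClosed (convexHull ℝ (toR2 '' S)) := Set.Finite.isClosed_convexHull (𝕜 := ℝ) (hfin.image _)
  have hmem : toR2 x₀ ∈ convexHull ℝ (toR2 '' S) :=
    subset_convexHull ℝ _ ⟨x₀, hx, rfl⟩
  rw [frontier, hC.closure_eq]
  refine ⟨hmem, fun hint => ?_⟩
  have hsub : convexHull ℝ (toR2 '' S) ⊆ {v : R2 | ⟪v, w⟫ ≤ ⟪toR2 x₀, w⟫} := by
    apply convexHull_min
    · rintro _ ⟨y, hy, rfl⟩; exact hmax y hy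
    · exact convex_halfSpace_le ⟨fun a b => inner_add_left a b w,
        fun c a => real_inner_smul_left a w c⟩ _
  obtain ⟨ε, hε, hball⟩ := Metric.mem_nhds_iff.1 (mem_interior_iff_mem_nhds.1 hint)
  have hwn : 0 < ‖w‖ := norm_pos_iff.2 hw
  set z : R2 := toR2 x₀ + (ε / (2 * ‖w‖)) • w with hz
  have hzball : z ∈ Metric.ball (toR2 x₀) ε := by
    rw [Metric.mem_ball, dist_eq_norm, hz]
    have : toR2 x₀ + (ε / (2 * ‖w‖)) • w - toR2 x₀ = (ε / (2 * ‖w‖)) • w := by abel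
    rw [this, norm_smul, Real.norm_eq_abs, abs_of_pos (by positivity)]
    have h2 : ε / (2 * ‖w‖) * ‖w‖ = ε / 2 := by field_simp
    rw [h2]; linarith
  have hzC := hsub (hball hzball)
  rw [Set.mem_setOf_eq, hz, inner_add_left, real_inner_smul_left,
    real_inner_self_eq_norm_mul_norm] at hzC
  have hpos : 0 < ε / (2 * ‖w‖) * (‖w‖ * ‖w‖) := by positivity
  linarith

lemma aux_gen_step (η : ℤ × ℤ → A) {S : Set (ℤ × ℤ)} {x₀ : ℤ × ℤ}
    (hx : x₀ ∈ S) (hgen : IsGenerated η S x₀) (j n n' : ℤ × ℤ)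
    (h : ∀ y ∈ S, y ≠ x₀ → η (y + j + n) = η (y + j + n')) :
    η (x₀ + j + n) = η (x₀ + j + n') := by
  have hf : IsColoring η (S \ {x₀}) (fun z => η (z + (j + n))) := ⟨j + n, fun x _ => rfl⟩
  obtain ⟨-, huniq⟩ := hgen _ hf
  have hg : IsColoring η S (fun z => η (z + (j + n))) := ⟨j + n, fun x _ => rfl⟩
  have hg' : IsColoring η S (fun z => η (z + (j + n'))) := ⟨j + n', fun x _ => rfl⟩
  have key := huniq _ _ hg hg' (fun x _ => rfl)
    (fun x hxm => by
      have hne : x ≠ x₀ := fun he => hxm.2 (by simp [he])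
      have := h x hxm.1 hne
      simp only [← add_assoc]
      exact this.symm) x₀ hx
  simpa [add_assoc] using key

lemma aux_det_ind (η : ℤ × ℤ → A) {S : Set (ℤ × ℤ)} {x₀ : ℤ × ℤ}
    (hx : x₀ ∈ S) (hgen : IsGenerated η S x₀)
    (N W D : ℤ) (hD : 0 ≤ D)
    (hSM : ∀ y ∈ S, y ≠ x₀ → N * y.1 + y.2 ≤ N * x₀.1 + x₀.2 - 1)
    (hW : ∀ y ∈ S, N * x₀.1 + x₀.2 - W ≤ N * y.1 + y.2)
    (hDc : ∀ y ∈ S, |y.1 - x₀.1| ≤ D ∧ |y.2 - x₀.2| ≤ D)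
    (n n' : ℤ × ℤ) (c₁ R : ℤ)
    (hbase : ∀ q : ℤ × ℤ, c₁ < N * q.1 + q.2 → N * q.1 + q.2 ≤ c₁ + W + 1 →
      |q.1| ≤ R → η (q + n) = η (q + n')) :
    ∀ k : ℕ, ∀ p : ℤ × ℤ, c₁ < N * p.1 + p.2 → N * p.1 + p.2 ≤ c₁ + W + 1 + k →
      |p.1| ≤ R - D * k → |p.2| ≤ R - D * k → η (p + n) = η (p + n') := by
  intro k
  induction k with
  | zero =>
    intro p h1 h2 h3 h4
    exact hbase p h1 (by simpa using h2) (by simpa using h3)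
  | succ k ih =>
    intro p h1 h2 h3 h4
    push_cast at h2 h3 h4
    by_cases hc : N * p.1 + p.2 ≤ c₁ + W + 1
    · refine hbase p h1 hc (le_trans h3 ?_)
      have : (0:ℤ) ≤ D * ((k:ℤ)+1) := mul_nonneg hD (by positivity)
      linarith
    · push_neg at hc
      have key := aux_gen_step η hx hgen (p - x₀) n n' ?_
      · have hpe : x₀ + (p - x₀) = p := by abel
        rwa [hpe] at key
      · intro y hy hne
        have hq1 : (y + (p - x₀)).1 = p.1 + (y.1 - x₀.1) := by
          simp [Prod.fst_add, Prod.fst_sub]; ring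
        have hq2 : (y + (p - x₀)).2 = p.2 + (y.2 - x₀.2) := by
          simp [Prod.snd_add, Prod.snd_sub]; ring
        have hsm := hSM y hy hne
        have hwb := hW y hy
        have ha1 := abs_le.1 (hDc y hy).1
        have ha2 := abs_le.1 (hDc y hy).2
        have hp1 := abs_le.1 h3
        have hp2 := abs_le.1 h4
        refine ih (y + (p - x₀)) ?_ ?_ ?_ ?_
        · rw [hq1, hq2]; nlinarith [hc, hwb]
        · rw [hq1, hq2]; nlinarith [h2, hsm]
        · rw [hq1, abs_le]
          constructor <;> linarith [hp1.1, hp1.2, ha1.1, ha1.2, hD]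
        · rw [hq2, abs_le]
          constructor <;> linarith [hp2.1, hp2.2, ha2.1, ha2.2, hD]

noncomputable def auxSlabBox (N : ℕ) (c₁ : ℤ) (W R : ℕ) : Finset (ℤ × ℤ) :=
  (Finset.Icc (-(R:ℤ)) R).biUnion fun a =>
    (Finset.Icc (c₁ + 1 - N * a) (c₁ + W + 1 - N * a)).image fun b => (a, b)

lemma aux_mem_slabBox {N : ℕ} {c₁ : ℤ} {W R : ℕ} {q : ℤ × ℤ} :
    q ∈ auxSlabBox N c₁ W R ↔
      |q.1| ≤ (R:ℤ) ∧ c₁ < N * q.1 + q.2 ∧ N * q.1 + q.2 ≤ c₁ + W + 1 := by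
  constructor
  · intro h
    rw [auxSlabBox, Finset.mem_biUnion] at h
    obtain ⟨a, ha, h⟩ := h
    rw [Finset.mem_image] at h
    obtain ⟨b, hb, he⟩ := h
    have e1 : a = q.1 := by rw [← he]
    have e2 : b = q.2 := by rw [← he]
    subst e1; subst e2
    rw [Finset.mem_Icc] at ha hb
    rw [abs_le]
    omega
  · rintro ⟨h1, h2, h3⟩
    rw [abs_le] at h1
    rw [auxSlabBox, Finset.mem_biUnion]
    refine ⟨q.1, by rw [Finset.mem_Icc]; omega, ?_⟩
    rw [Finset.mem_image]
    exact ⟨q.2, by rw [Finset.mem_Icc]; omega, rfl⟩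

lemma aux_card_slabBox (N : ℕ) (c₁ : ℤ) (W R : ℕ) :
    (auxSlabBox N c₁ W R).card ≤ (2 * R + 1) * (W + 1) := by
  refine le_trans Finset.card_biUnion_le ?_
  have h1 : ∀ a ∈ Finset.Icc (-(R:ℤ)) R,
      ((Finset.Icc (c₁ + 1 - N * a) (c₁ + W + 1 - N * a)).image fun b => ((a, b) : ℤ × ℤ)).card
        ≤ W + 1 := by
    intro a _
    refine le_trans Finset.card_image_le ?_
    rw [Int.card_Icc]
    omega
  refine le_trans (Finset.sum_le_card_nsmul _ _ (W + 1) h1) ?_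
  rw [smul_eq_mul, Int.card_Icc]
  have h2 : ((R:ℤ) + 1 - -(R:ℤ)).toNat = 2 * R + 1 := by omega
  rw [h2]

lemma aux_count_le [Fintype A] (η : ℤ × ℤ → A) (F : Set (ℤ × ℤ)) (B : Finset (ℤ × ℤ))
    (hdet : ∀ n n' : ℤ × ℤ, (∀ q ∈ B, η (q + n) = η (q + n')) →
      ∀ p ∈ F, η (p + n) = η (p + n')) :
    colorCount η F ≤ Fintype.card A ^ B.card := by
  classical
  rw [colorCount, ← Nat.card_coe_set_eq]
  set CF := {f : F → A | ∃ n : ℤ × ℤ, ∀ x : F, f x = η ((x : ℤ × ℤ) + n)} with hCF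
  have hinj : Function.Injective
      (fun f : CF => (fun q : B => η ((q : ℤ × ℤ) + Classical.choose f.2))) := by
    rintro ⟨f, hf⟩ ⟨g, hg⟩ h
    have hfs := Classical.choose_spec hf
    have hgs := Classical.choose_spec hg
    have hag : ∀ q ∈ B, η (q + Classical.choose hf) = η (q + Classical.choose hg) := by
      intro q hq
      exact congrFun h ⟨q, hq⟩
    have hFa := hdet _ _ hag
    refine Subtype.ext (funext fun x => ?_)
    show f x = g x
    rw [hfs x, hgs x]
    exact hFa x x.2
  have hle := Nat.card_le_card_of_injective _ hinj
  refine le_trans hle ?_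
  rw [Nat.card_fun, Nat.card_eq_fintype_card, Nat.card_eq_fintype_card, Fintype.card_coe]

lemma aux_latt_bound {u : R2} {s t : ℝ} (hu : ‖u‖ = 1) {p : ℤ × ℤ}
    (hp : p ∈ latticePts (segNbhd u s t)) :
    |(p.1 : ℝ)| ≤ |s| + t ∧ |(p.2 : ℝ)| ≤ |s| + t := by
  obtain ⟨w, hw, hd⟩ := hp
  rw [segment_eq_image] at hw
  obtain ⟨θ, hθ, rfl⟩ := hw
  have hwn : ‖(1 - θ) • (0:R2) + θ • (s • u)‖ ≤ |s| := by
    rw [smul_zero, zero_add, norm_smul, norm_smul, hu, Real.norm_eq_abs, Real.norm_eq_abs,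
      mul_one]
    have h0 : |θ| ≤ 1 := by rw [abs_le]; exact ⟨by linarith [hθ.1], hθ.2⟩
    nlinarith [abs_nonneg s, abs_nonneg θ]
  set w := (1 - θ) • (0:R2) + θ • (s • u)
  have hn : ‖toR2 p‖ ≤ |s| + t := by
    have h1 : toR2 p = w + (toR2 p - w) := by abel
    calc ‖toR2 p‖ = ‖w + (toR2 p - w)‖ := by rw [← h1]
      _ ≤ ‖w‖ + ‖toR2 p - w‖ := norm_add_le _ _
      _ ≤ |s| + t := by
          refine add_le_add hwn (le_of_lt ?_)
          rwa [← dist_eq_norm]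
  constructor
  · calc |(p.1:ℝ)| = |toR2 p 0| := by rw [aux_toR2_apply0]
      _ ≤ ‖toR2 p‖ := aux_abs_coord_le _ _
      _ ≤ _ := hn
  · calc |(p.2:ℝ)| = |toR2 p 1| := by rw [aux_toR2_apply1]
      _ ≤ ‖toR2 p‖ := aux_abs_coord_le _ _
      _ ≤ _ := hn

end Stmt4Aux

set_option maxHeartbeats 2000000 in
/-- a generating set gives uniformly bounded directional entropy. -/
theorem stmt4 {A : Type*} [Fintype A] (η : ℤ × ℤ → A)
    (hgen : ∃ S : Set (ℤ × ℤ), IsGeneratingSet η S) :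
    ∃ c : ℝ, 0 < c ∧ ∀ u : R2, ‖u‖ = 1 → dirEnt η u < (c : EReal) := by
  classical
  obtain ⟨S, hSfin, hSne, hSconv, hSgen⟩ := hgen
  have hAne : Nonempty A := ⟨η 0⟩
  have hA1 : 1 ≤ Fintype.card A := Fintype.card_pos
  obtain ⟨LA, hLAdef⟩ : ∃ x : ℝ, x = Real.log (Fintype.card A) := ⟨_, rfl⟩
  have hLA0 : 0 ≤ LA := hLAdef ▸ Real.log_nonneg (by exact_mod_cast hA1)
  -- a coordinate bound on S
  obtain ⟨m0, hm0S, hm0⟩ := hSfin.toFinset.exists_max_image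
    (fun y => max |y.1| |y.2|) (by rwa [Set.Finite.toFinset_nonempty])
  obtain ⟨M, hMdef⟩ : ∃ m : ℕ, (m:ℤ) = max |m0.1| |m0.2| :=
    ⟨(max |m0.1| |m0.2|).toNat,
      Int.toNat_of_nonneg (le_trans (abs_nonneg _) (le_max_left _ _))⟩
  have hM : ∀ y ∈ S, |y.1| ≤ (M:ℤ) ∧ |y.2| ≤ (M:ℤ) := by
    intro y hy
    have h1 := hm0 y (hSfin.mem_toFinset.2 hy)
    rw [← hMdef] at h1
    exact ⟨le_trans (le_max_left _ _) h1, le_trans (le_max_right _ _) h1⟩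
  obtain ⟨N, hNdef⟩ : ∃ n : ℕ, n = 2 * M + 1 := ⟨_, rfl⟩
  obtain ⟨D, hDdef⟩ : ∃ n : ℕ, n = 2 * M := ⟨_, rfl⟩
  obtain ⟨W, hWdef⟩ : ∃ n : ℕ, n = 2 * M * (N + 1) := ⟨_, rfl⟩
  have hNZ : (N:ℤ) = 2 * (M:ℤ) + 1 := by rw [hNdef]; push_cast; ring
  have hDZ : (D:ℤ) = 2 * (M:ℤ) := by rw [hDdef]; push_cast; ring
  have hWZ : (W:ℤ) = 2 * (M:ℤ) * ((N:ℤ) + 1) := by rw [hWdef]; push_cast; ring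
  -- the distinguished vertex
  obtain ⟨x₀, hx₀S', hx₀max⟩ := hSfin.toFinset.exists_max_image
    (fun y => (N:ℤ) * y.1 + y.2) (by rwa [Set.Finite.toFinset_nonempty])
  have hx₀S : x₀ ∈ S := hSfin.mem_toFinset.1 hx₀S'
  have hx₀M := hM x₀ hx₀S
  -- strict maximality
  have hSM : ∀ y ∈ S, y ≠ x₀ → (N:ℤ) * y.1 + y.2 ≤ (N:ℤ) * x₀.1 + x₀.2 - 1 := by
    intro y hy hne
    have hle := hx₀max y (hSfin.mem_toFinset.2 hy)
    have hyM := hM y hy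
    have hne' : (N:ℤ) * y.1 + y.2 ≠ (N:ℤ) * x₀.1 + x₀.2 := by
      intro heq
      have he2 : (N:ℤ) * (y.1 - x₀.1) = x₀.2 - y.2 := by linarith [heq]
      have habs : |x₀.2 - y.2| ≤ 2 * (M:ℤ) := by
        have h6 := abs_add_le x₀.2 (-y.2)
        rw [abs_neg] at h6
        have h3 : x₀.2 - y.2 = x₀.2 + -y.2 := by ring
        rw [h3]
        linarith [hx₀M.2, hyM.2]
      have hy1 : y.1 = x₀.1 := by
        by_contra hxne
        have h4 : (1:ℤ) ≤ |y.1 - x₀.1| := Int.one_le_abs (sub_ne_zero.2 hxne)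
        have h5 : (N:ℤ) ≤ |(N:ℤ) * (y.1 - x₀.1)| := by
          rw [abs_mul, abs_of_nonneg (by positivity : (0:ℤ) ≤ (N:ℤ))]
          nlinarith [h4]
        rw [he2, hNZ] at h5
        linarith [habs]
      have hy2 : y.2 = x₀.2 := by
        rw [hy1] at heq
        linarith [heq]
      exact hne (Prod.ext hy1 hy2)
    have hlt := lt_of_le_of_ne hle hne'
    omega
  -- width bound
  have hWb : ∀ y ∈ S, (N:ℤ) * x₀.1 + x₀.2 - (W:ℤ) ≤ (N:ℤ) * y.1 + y.2 := by
    intro y hy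
    have hyM := hM y hy
    have ha1 := abs_le.1 hyM.1
    have ha2 := abs_le.1 hyM.2
    have hb1 := abs_le.1 hx₀M.1
    have hb2 := abs_le.1 hx₀M.2
    have hNn : (0:ℤ) ≤ (N:ℤ) := by positivity
    have hmul : (N:ℤ) * x₀.1 - (N:ℤ) * y.1 ≤ (N:ℤ) * (2 * M) := by
      have h7 : x₀.1 - y.1 ≤ 2 * (M:ℤ) := by linarith
      nlinarith [h7, hNn]
    rw [hWZ]
    nlinarith [hmul]
  -- coordinate distance bound
  have hDc : ∀ y ∈ S, |y.1 - x₀.1| ≤ (D:ℤ) ∧ |y.2 - x₀.2| ≤ (D:ℤ) := by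
    intro y hy
    have hyM := hM y hy
    constructor
    · have h6 := abs_add_le y.1 (-x₀.1)
      rw [abs_neg] at h6
      have h3 : y.1 - x₀.1 = y.1 + -x₀.1 := by ring
      rw [h3, hDZ]
      linarith [hyM.1, hx₀M.1]
    · have h6 := abs_add_le y.2 (-x₀.2)
      rw [abs_neg] at h6
      have h3 : y.2 - x₀.2 = y.2 + -x₀.2 := by ring
      rw [h3, hDZ]
      linarith [hyM.2, hx₀M.2]
  -- x₀ is on the frontier, hence generated
  have hx₀gen : IsGenerated η S x₀ := by
    refine hSgen x₀ hx₀S ?_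
    refine aux_mem_frontier_of_max hSfin hx₀S (toR2 ((N:ℤ), 1)) ?_ ?_
    · intro h
      have h8 : toR2 ((N:ℤ), 1) 1 = (0:R2) 1 := by rw [h]
      rw [aux_toR2_apply1] at h8
      simp at h8
    · intro y hy
      rw [aux_inner_toR2, aux_inner_toR2]
      have h := hx₀max y (hSfin.mem_toFinset.2 hy)
      have h' : (y.1 * (N:ℤ) + y.2 * 1 : ℤ) ≤ (x₀.1 * (N:ℤ) + x₀.2 * 1 : ℤ) := by
        have : (N:ℤ) * y.1 + y.2 ≤ (N:ℤ) * x₀.1 + x₀.2 := h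
        linarith
      exact_mod_cast h'
  obtain ⟨C₀, hC₀def⟩ : ∃ n : ℕ, n = (2 * (1 + 2 * D * (N + 1)) + 1) * (W + 1) := ⟨_, rfl⟩
  -- the key complexity bound
  have key : ∀ (u : R2), ‖u‖ = 1 → ∀ t s : ℝ, 0 < t →
      Real.log (Pc η (segNbhd u s t)) ≤ (C₀:ℝ) * ((|s| + t) + 2) * LA := by
    intro u hu t s ht
    obtain ⟨Mn, hMndef⟩ : ∃ m : ℕ, m = ⌈|s| + t⌉₊ := ⟨_, rfl⟩
    obtain ⟨c₁, hc₁def⟩ : ∃ c : ℤ, c = -(((N:ℤ)+1) * (Mn:ℤ)) - 1 := ⟨_, rfl⟩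
    obtain ⟨K, hKdef⟩ : ∃ k : ℕ, k = 2 * (N+1) * Mn := ⟨_, rfl⟩
    obtain ⟨R, hRdef⟩ : ∃ r : ℕ, r = Mn + D * K := ⟨_, rfl⟩
    have hKZ : (K:ℤ) = 2 * ((N:ℤ)+1) * (Mn:ℤ) := by rw [hKdef]; push_cast; ring
    have hRZ : (R:ℤ) = (Mn:ℤ) + (D:ℤ) * (K:ℤ) := by rw [hRdef]; push_cast; ring
    have hF : ∀ p ∈ latticePts (segNbhd u s t), |p.1| ≤ (Mn:ℤ) ∧ |p.2| ≤ (Mn:ℤ) := by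
      intro p hp
      obtain ⟨h1, h2⟩ := aux_latt_bound hu hp
      have hce : |s| + t ≤ (Mn:ℝ) := by rw [hMndef]; exact Nat.le_ceil _
      constructor
      · have h3 : |(p.1:ℝ)| ≤ (Mn:ℝ) := le_trans h1 hce
        rw [← Int.cast_abs] at h3
        exact_mod_cast h3
      · have h3 : |(p.2:ℝ)| ≤ (Mn:ℝ) := le_trans h2 hce
        rw [← Int.cast_abs] at h3
        exact_mod_cast h3
    have hdet : ∀ n n' : ℤ × ℤ, (∀ q ∈ auxSlabBox N c₁ W R, η (q + n) = η (q + n')) →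
        ∀ p ∈ latticePts (segNbhd u s t), η (p + n) = η (p + n') := by
      intro n n' hB p hp
      have hbase : ∀ q : ℤ × ℤ, c₁ < (N:ℤ) * q.1 + q.2 → (N:ℤ) * q.1 + q.2 ≤ c₁ + W + 1 →
          |q.1| ≤ (R:ℤ) → η (q + n) = η (q + n') := by
        intro q hq1 hq2 hq3
        exact hB q (aux_mem_slabBox.2 ⟨hq3, hq1, hq2⟩)
      obtain ⟨hp1, hp2⟩ := hF p hp
      have e1 := abs_le.1 hp1
      have e2 := abs_le.1 hp2
      have hNn : (0:ℤ) ≤ (N:ℤ) := by positivity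
      have hMnn : (0:ℤ) ≤ (Mn:ℤ) := by positivity
      have hmul1 : (N:ℤ) * (-(Mn:ℤ)) ≤ (N:ℤ) * p.1 :=
        mul_le_mul_of_nonneg_left e1.1 hNn
      have hmul2 : (N:ℤ) * p.1 ≤ (N:ℤ) * (Mn:ℤ) :=
        mul_le_mul_of_nonneg_left e1.2 hNn
      refine aux_det_ind η hx₀S hx₀gen (N:ℤ) (W:ℤ) (D:ℤ) (by positivity)
        hSM hWb hDc n n' c₁ (R:ℤ) hbase K p ?_ ?_ ?_ ?_
      · rw [hc₁def]; nlinarith [hmul1, e2.1]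
      · rw [hc₁def, hKZ]
        have hWn : (0:ℤ) ≤ (W:ℤ) := by positivity
        nlinarith [hmul2, e2.2]
      · have h9 : (R:ℤ) - (D:ℤ) * (K:ℤ) = (Mn:ℤ) := by rw [hRZ]; ring
        rw [h9]
        exact hp1
      · have h9 : (R:ℤ) - (D:ℤ) * (K:ℤ) = (Mn:ℤ) := by rw [hRZ]; ring
        rw [h9]
        exact hp2
    have hcount : Pc η (segNbhd u s t) ≤ Fintype.card A ^ (auxSlabBox N c₁ W R).card :=
      aux_count_le η _ _ hdet
    have hBcard : (auxSlabBox N c₁ W R).card ≤ (2 * R + 1) * (W + 1) :=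
      aux_card_slabBox N c₁ W R
    have hPc : Pc η (segNbhd u s t) ≤ Fintype.card A ^ ((2 * R + 1) * (W + 1)) :=
      le_trans hcount (Nat.pow_le_pow_right hA1 hBcard)
    have hlog : Real.log (Pc η (segNbhd u s t)) ≤ (((2 * R + 1) * (W + 1) : ℕ) : ℝ) * LA := by
      rcases Nat.eq_zero_or_pos (Pc η (segNbhd u s t)) with h0 | hpos
      · rw [h0]
        simp only [Nat.cast_zero, Real.log_zero]
        positivity
      · calc Real.log (Pc η (segNbhd u s t))
            ≤ Real.log ((Fintype.card A : ℝ) ^ ((2 * R + 1) * (W + 1))) := by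
              apply Real.log_le_log (by exact_mod_cast hpos)
              exact_mod_cast hPc
          _ = (((2 * R + 1) * (W + 1) : ℕ) : ℝ) * LA := by
              rw [Real.log_pow, hLAdef]
    have harith : ((2 * R + 1) * (W + 1) : ℕ) ≤ C₀ * (Mn + 1) := by
      have hRe : R = Mn * (1 + 2 * D * (N + 1)) := by rw [hRdef, hKdef]; ring
      have h1 : 2 * R + 1 ≤ (2 * (1 + 2 * D * (N + 1)) + 1) * (Mn + 1) := by
        rw [hRe]
        have he : (2 * (1 + 2 * D * (N + 1)) + 1) * (Mn + 1)
            = 2 * (Mn * (1 + 2 * D * (N + 1))) + (2 * (1 + 2 * D * (N + 1)) + Mn + 1) := by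
          ring
        rw [he]
        refine Nat.add_le_add_left ?_ _
        omega
      calc (2 * R + 1) * (W + 1) ≤ ((2 * (1 + 2 * D * (N + 1)) + 1) * (Mn + 1)) * (W + 1) :=
            Nat.mul_le_mul_right _ h1
        _ = C₀ * (Mn + 1) := by rw [hC₀def]; ring
    have hMnr : (Mn:ℝ) ≤ |s| + t + 1 := by
      have h10 := Nat.ceil_lt_add_one (by positivity : (0:ℝ) ≤ |s| + t)
      have h11 : ((⌈|s| + t⌉₊ : ℕ) : ℝ) < |s| + t + 1 := h10
      rw [hMndef]
      linarith
    calc Real.log (Pc η (segNbhd u s t)) ≤ (((2 * R + 1) * (W + 1) : ℕ) : ℝ) * LA := hlog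
      _ ≤ ((C₀ * (Mn + 1) : ℕ) : ℝ) * LA := by
          apply mul_le_mul_of_nonneg_right _ hLA0
          exact_mod_cast harith
      _ ≤ (C₀:ℝ) * ((|s| + t) + 2) * LA := by
          apply mul_le_mul_of_nonneg_right _ hLA0
          push_cast
          have hC₀n : (0:ℝ) ≤ (C₀:ℝ) := by positivity
          nlinarith [hMnr, hC₀n]
  -- assemble
  refine ⟨2 * C₀ * LA + 1, ?_, ?_⟩
  · have h1 : (0:ℝ) ≤ 2 * C₀ * LA := by
      apply mul_nonneg _ hLA0
      positivity
    linarith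
  · intro u hu
    rw [dirEnt]
    have hle : ∀ t : Set.Ioi (0:ℝ),
        Filter.limsup (fun s : ℝ =>
          ((Real.log (Pc η (segNbhd u s (t : ℝ))) / s : ℝ) : EReal)) Filter.atTop
          ≤ ((2 * C₀ * LA : ℝ) : EReal) := by
      intro t
      refine Filter.limsup_le_of_le (by isBoundedDefault) ?_
      filter_upwards [Filter.eventually_ge_atTop (max 1 ((t : ℝ) + 2))] with s hs
      have hs1 : (1:ℝ) ≤ s := le_trans (le_max_left _ _) hs
      have hs2 : (t : ℝ) + 2 ≤ s := le_trans (le_max_right _ _) hs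
      have ht0 : (0:ℝ) < (t:ℝ) := t.2
      have hk := key u hu (t : ℝ) s ht0
      have habs : |s| = s := abs_of_pos (by linarith)
      rw [habs] at hk
      rw [EReal.coe_le_coe_iff, div_le_iff₀ (by linarith : (0:ℝ) < s)]
      have hC₀n : (0:ℝ) ≤ (C₀:ℝ) := by positivity
      nlinarith [hk, hLA0, hs1, hs2, hC₀n, mul_nonneg hC₀n hLA0]
    refine lt_of_le_of_lt (iSup_le hle) ?_
    rw [EReal.coe_lt_coe_iff]
    linarith
end

section
/- Suppose P_η(n₁, k₁) ≤ n₁k₁ for some positive integers n₁, k₁. Then for each v ∈ {e₁, −e₁, e₂, −e₂} there exists a v-balanced set for η. Moreover, an e₁-balanced set and a (−e₁)-balanced set can be chosen having the same height (vertical extent), and an e₂-balanced set and a (−e₂)-balanced set can be chosen having the same width (horizontal extent). -/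
open Filter Set

section Stmt7AuxSection
noncomputable section
open Set
set_option linter.unusedSectionVars false
set_option linter.unusedVariables false
set_option linter.unreachableTactic false
set_option linter.unusedTactic false
namespace Stmt7Aux

variable {A : Type*} [Fintype A]

def Col (η : ℤ × ℤ → A) (S : Set (ℤ × ℤ)) : Set (S → A) :=
  {f : S → A | ∃ n : ℤ × ℤ, ∀ x : S, f x = η ((x : ℤ × ℤ) + n)}

lemma colorCount_eq (η : ℤ × ℤ → A) (S : Set (ℤ × ℤ)) :
    colorCount η S = (Col η S).ncard := rfl

lemma col_finite (η : ℤ × ℤ → A) {S : Set (ℤ × ℤ)} (hS : S.Finite) : (Col η S).Finite := by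
  haveI := hS.to_subtype
  exact Set.toFinite _

lemma col_nonempty (η : ℤ × ℤ → A) (S : Set (ℤ × ℤ)) : (Col η S).Nonempty :=
  ⟨fun x => η ((x : ℤ × ℤ) + 0), ⟨0, fun _ => rfl⟩⟩

lemma colorCount_pos (η : ℤ × ℤ → A) {S : Set (ℤ × ℤ)} (hS : S.Finite) :
    1 ≤ colorCount η S := by
  rw [colorCount_eq]
  exact (Set.ncard_pos (col_finite η hS)).2 (col_nonempty η S)

/-- restriction map on colorings -/
def res {S T : Set (ℤ × ℤ)} (h : S ⊆ T) (f : T → A) : S → A := fun x => f ⟨x.1, h x.2⟩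

lemma res_image (η : ℤ × ℤ → A) {S T : Set (ℤ × ℤ)} (h : S ⊆ T) :
    res (A := A) h '' Col η T = Col η S := by
  apply subset_antisymm
  · rintro _ ⟨f, ⟨n, hn⟩, rfl⟩
    exact ⟨n, fun x => hn ⟨x.1, h x.2⟩⟩
  · rintro f ⟨n, hn⟩
    refine ⟨fun x => η ((x : ℤ × ℤ) + n), ⟨n, fun _ => rfl⟩, ?_⟩
    funext x
    exact (hn x).symm

lemma colorCount_mono (η : ℤ × ℤ → A) {S T : Set (ℤ × ℤ)} (h : S ⊆ T) (hT : T.Finite) :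
    colorCount η S ≤ colorCount η T := by
  rw [colorCount_eq, colorCount_eq, ← res_image η h]
  exact Set.ncard_image_le (col_finite η hT)

lemma generated_of_le (η : ℤ × ℤ → A) {S : Set (ℤ × ℤ)} (hS : S.Finite) {x : ℤ × ℤ}
    (hx : x ∈ S) (hle : colorCount η S ≤ colorCount η (S \ {x})) : IsGenerated η S x := by
  have hsub : S \ {x} ⊆ S := Set.diff_subset
  have hinj : Set.InjOn (res (A := A) hsub) (Col η S) := by
    rw [← Set.ncard_image_iff (col_finite η hS)]
    apply le_antisymm (Set.ncard_image_le (col_finite η hS))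
    rw [res_image η hsub]
    exact le_trans hle (le_of_eq rfl)
  intro f ⟨n, hn⟩
  constructor
  · exact ⟨fun y => η (y + n), ⟨n, fun _ _ => rfl⟩, fun y hy => (hn y hy).symm⟩
  · rintro g g' ⟨m, hm⟩ ⟨m', hm'⟩ hgf hg'f y hy
    have hcg : (fun z : S => η ((z : ℤ × ℤ) + m)) ∈ Col η S := ⟨m, fun _ => rfl⟩
    have hcg' : (fun z : S => η ((z : ℤ × ℤ) + m')) ∈ Col η S := ⟨m', fun _ => rfl⟩
    have heq : res (A := A) hsub (fun z : S => η ((z : ℤ × ℤ) + m)) =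
        res (A := A) hsub (fun z : S => η ((z : ℤ × ℤ) + m')) := by
      funext z
      have hz : (z : ℤ × ℤ) ∈ S \ {x} := z.2
      show η ((z : ℤ × ℤ) + m) = η ((z : ℤ × ℤ) + m')
      rw [← hm _ hz.1, ← hm' _ hz.1, hgf _ hz, hg'f _ hz]
    have := hinj hcg hcg' heq
    have := congrFun this ⟨y, hy⟩
    simpa only [hm y hy, hm' y hy] using this

lemma lt_of_not_generated (η : ℤ × ℤ → A) {S : Set (ℤ × ℤ)} (hS : S.Finite) {x : ℤ × ℤ}
    (hx : x ∈ S) (h : ¬ IsGenerated η S x) :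
    colorCount η (S \ {x}) < colorCount η S := by
  simp only [IsGenerated, not_forall] at h
  obtain ⟨f, hf, hnu⟩ := h
  obtain ⟨n, hn⟩ := hf
  simp only [ExtendsUniquely, not_and_or] at hnu
  rcases hnu with hne | hnu
  · exact absurd ⟨fun y => η (y + n), ⟨n, fun _ _ => rfl⟩, fun y hy => (hn y hy).symm⟩ hne
  push_neg at hnu
  obtain ⟨g, g', ⟨m, hm⟩, ⟨m', hm'⟩, hgf, hg'f, y, hy, hne⟩ := hnu
  set G : S → A := fun z => η ((z : ℤ × ℤ) + m) with hG
  set G' : S → A := fun z => η ((z : ℤ × ℤ) + m') with hG'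
  have hGmem : G ∈ Col η S := ⟨m, fun _ => rfl⟩
  have hG'mem : G' ∈ Col η S := ⟨m', fun _ => rfl⟩
  have hsub : S \ {x} ⊆ S := Set.diff_subset
  have hGne : G ≠ G' := by
    intro hcon
    apply hne
    rw [hm y hy, hm' y hy]
    exact congrFun hcon ⟨y, hy⟩
  have hres : res (A := A) hsub G = res (A := A) hsub G' := by
    funext z
    have hz : (z : ℤ × ℤ) ∈ S \ {x} := z.2
    show η ((z : ℤ × ℤ) + m) = η ((z : ℤ × ℤ) + m')
    rw [← hm _ hz.1, ← hm' _ hz.1, hgf _ hz, hg'f _ hz]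
  -- image over Col η S \ {G'} is the full image
  have himg : res (A := A) hsub '' (Col η S \ {G'}) = res (A := A) hsub '' Col η S := by
    apply subset_antisymm (Set.image_mono Set.diff_subset)
    rintro _ ⟨F, hF, rfl⟩
    by_cases hFG : F = G'
    · exact ⟨G, ⟨hGmem, by simpa using hGne⟩, by rw [hFG, ← hres]⟩
    · exact ⟨F, ⟨hF, hFG⟩, rfl⟩
  have h1 : colorCount η (S \ {x}) ≤ (Col η S \ {G'}).ncard := by
    rw [colorCount_eq, ← res_image η hsub, ← himg]
    exact Set.ncard_image_le ((col_finite η hS).subset Set.diff_subset)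
  have h2 : (Col η S \ {G'}).ncard < (Col η S).ncard :=
    Set.ncard_diff_singleton_lt_of_mem hG'mem (col_finite η hS)
  exact lt_of_le_of_lt h1 h2

end Stmt7Aux


section S2
open Set
variable {A : Type*} [Fintype A]
namespace Stmt7Aux

lemma cc_equivariant (η : ℤ × ℤ → A) (S : Set (ℤ × ℤ)) (φ ψ : ℤ × ℤ → ℤ × ℤ)
    (hφ : Function.Injective φ) (hψ : Function.Surjective ψ)
    (h : ∀ p q, φ p + q = φ (p + ψ q)) :
    colorCount η (φ '' S) = colorCount (η ∘ φ) S := by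
  classical
  set m : (↥(φ '' S) → A) → (↥S → A) :=
    fun f x => f ⟨φ x.1, ⟨x.1, x.2, rfl⟩⟩ with hmdef
  have minj : Function.Injective m := by
    intro f f' hff
    funext y
    obtain ⟨x, hx, hfx⟩ := y.2
    have hy : (⟨φ x, ⟨x, hx, rfl⟩⟩ : (φ '' S : Set (ℤ × ℤ))) = y := Subtype.ext hfx
    have := congrFun hff ⟨x, hx⟩
    simpa [hmdef, hy] using this
  have himg : m '' Col η (φ '' S) = Col (η ∘ φ) S := by
    apply subset_antisymm
    · rintro _ ⟨f, ⟨n, hn⟩, rfl⟩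
      refine ⟨ψ n, fun x => ?_⟩
      show f ⟨φ x.1, _⟩ = (η ∘ φ) (x.1 + ψ n)
      rw [hn ⟨φ x.1, ⟨x.1, x.2, rfl⟩⟩]
      show η (φ x.1 + n) = η (φ (x.1 + ψ n))
      rw [h]
    · rintro g ⟨n₀, hn₀⟩
      obtain ⟨q, hq⟩ := hψ n₀
      refine ⟨fun y => η ((y : ℤ × ℤ) + q), ⟨q, fun _ => rfl⟩, ?_⟩
      funext x
      show η (φ x.1 + q) = g x
      rw [hn₀ x, h, hq]
      rfl
  rw [colorCount_eq, colorCount_eq, ← himg, Set.ncard_image_of_injective _ minj]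

lemma col_shift (η : ℤ × ℤ → A) (S : Set (ℤ × ℤ)) (j : ℤ × ℤ) :
    Col (fun p => η (p + j)) S = Col η S := by
  ext f
  constructor
  · rintro ⟨n, hn⟩
    exact ⟨n + j, fun x => by rw [hn x, ← add_assoc]⟩
  · rintro ⟨n, hn⟩
    refine ⟨n - j, fun x => ?_⟩
    rw [hn x]
    show η _ = η _
    congr 1
    abel

lemma cc_translate (η : ℤ × ℤ → A) (S : Set (ℤ × ℤ)) (j : ℤ × ℤ) :
    colorCount η ((fun x => x + j) '' S) = colorCount η S := by
  have := cc_equivariant η S (fun x => x + j) id (add_left_injective j)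
    Function.surjective_id (by intro p q; show p + j + q = p + q + j; abel)
  rw [this, colorCount_eq, colorCount_eq]
  congr 1
  exact col_shift η S j

/-- The rectangle `[0,n-1] × [0,k-1]`. -/
def Rset (n k : ℕ) : Set (ℤ × ℤ) := {p : ℤ × ℤ | 0 ≤ p.1 ∧ p.1 < (n : ℤ) ∧ 0 ≤ p.2 ∧ p.2 < (k : ℤ)}

lemma Rset_finite (n k : ℕ) : (Rset n k).Finite := by
  apply Set.Finite.subset ((Set.finite_Icc (0 : ℤ) n).prod (Set.finite_Icc (0 : ℤ) k))
  rintro ⟨x, y⟩ ⟨h1, h2, h3, h4⟩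
  exact ⟨⟨h1, le_of_lt h2⟩, ⟨h3, le_of_lt h4⟩⟩

lemma Rset_mono (n k n' k' : ℕ) (hn : n ≤ n') (hk : k ≤ k') : Rset n k ⊆ Rset n' k' := by
  rintro ⟨x, y⟩ ⟨h1, h2, h3, h4⟩
  refine ⟨h1, lt_of_lt_of_le h2 (by exact_mod_cast hn), h3, lt_of_lt_of_le h4 (by exact_mod_cast hk)⟩

/-- Case A : a rectangle satisfying the key complexity inequality exists. -/
lemma caseA (η : ℤ × ℤ → A) (n₁ k₁ : ℕ) (hn₁ : 0 < n₁) (hk₁ : 0 < k₁)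
    (hP : colorCount η (Rset n₁ k₁) ≤ n₁ * k₁) :
    ∃ n k : ℕ, 1 ≤ n ∧ 2 ≤ k ∧
      colorCount η (Rset n k) < colorCount η (Rset n (k - 1)) + n := by
  by_contra hcon
  push_neg at hcon
  have hH : ∀ n k : ℕ, 1 ≤ n → 2 ≤ k →
      colorCount η (Rset n (k - 1)) + n ≤ colorCount η (Rset n k) := by
    intro n k hn hk
    exact hcon n k hn hk
  -- Step 1 : vertical growth
  have step1 : ∀ k : ℕ, 1 ≤ k → colorCount η (Rset n₁ 1) + (k - 1) * n₁ ≤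
      colorCount η (Rset n₁ k) := by
    intro k
    induction k with
    | zero => omega
    | succ k ih =>
      intro _
      rcases Nat.eq_zero_or_pos k with rfl | hk1
      · simp
      · have := ih hk1
        have h2 := hH n₁ (k+1) hn₁ (by omega)
        simp only [Nat.add_sub_cancel] at h2
        have : colorCount η (Rset n₁ 1) + (k - 1) * n₁ + n₁ ≤ colorCount η (Rset n₁ (k+1)) :=
          le_trans (by omega) h2
        have hkk : (k + 1 - 1) * n₁ = (k-1) * n₁ + n₁ := by
          cases k with
          | zero => omega
          | succ k' => simp [Nat.succ_sub_one]; ring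
        omega
  have hcc1 : colorCount η (Rset n₁ 1) ≤ n₁ := by
    have := step1 k₁ hk₁
    have hsplit : n₁ * k₁ = n₁ + (k₁ - 1) * n₁ := by
      cases k₁ with
      | zero => omega
      | succ k' => simp [Nat.succ_sub_one]; ring
    omega
  -- Step 2 : Morse–Hedlund
  have step2 : ∃ m : ℕ, 1 ≤ m ∧ colorCount η (Rset (m+1) 1) ≤ colorCount η (Rset m 1) := by
    by_contra hmh
    push_neg at hmh
    by_cases hone : colorCount η (Rset 1 1) ≤ 1
    · -- η is constant
      have hconst : ∀ p q : ℤ × ℤ, η p = η q := by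
        intro p q
        have h00 : ((0 : ℤ), (0 : ℤ)) ∈ Rset 1 1 := by simp [Rset]
        have hfp : (fun x : (Rset 1 1 : Set (ℤ × ℤ)) => η ((x : ℤ × ℤ) + p)) ∈ Col η (Rset 1 1) :=
          ⟨p, fun _ => rfl⟩
        have hfq : (fun x : (Rset 1 1 : Set (ℤ × ℤ)) => η ((x : ℤ × ℤ) + q)) ∈ Col η (Rset 1 1) :=
          ⟨q, fun _ => rfl⟩
        have := ((Set.ncard_le_one_iff (col_finite η (Rset_finite 1 1))).1 hone) hfp hfq
        have := congrFun this ⟨(0,0), h00⟩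
        have h0 : ((0 : ℤ), (0 : ℤ)) = (0 : ℤ × ℤ) := rfl
        simpa [h0] using this
      have h21 : colorCount η (Rset (1+1) 1) ≤ 1 := by
        rw [colorCount_eq]
        apply (Set.ncard_le_one_iff (col_finite η (Rset_finite (1+1) 1))).2
        rintro f g ⟨n, hn⟩ ⟨n', hn'⟩
        funext x
        rw [hn x, hn' x]
        exact hconst _ _
      have h11 : 1 ≤ colorCount η (Rset 1 1) := colorCount_pos η (Rset_finite 1 1)
      have := hmh 1 le_rfl
      omega
    · push_neg at hone
      have grow : ∀ m : ℕ, 1 ≤ m → m + 1 ≤ colorCount η (Rset m 1) := by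
        intro m
        induction m with
        | zero => omega
        | succ m ih =>
          intro _
          rcases Nat.eq_zero_or_pos m with rfl | h1
          · simpa using Nat.succ_le_of_lt hone
          · have := ih h1
            have := hmh m h1
            omega
      have := grow n₁ hn₁
      omega
  obtain ⟨m, hm1, hm⟩ := step2
  -- Step 3 : determinism
  have hsubm : Rset m 1 ⊆ Rset (m+1) 1 := Rset_mono _ _ _ _ (by omega) le_rfl
  have hinjm : Set.InjOn (res (A := A) hsubm) (Col η (Rset (m+1) 1)) := by
    rw [← Set.ncard_image_iff (col_finite η (Rset_finite (m+1) 1))]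
    apply le_antisymm (Set.ncard_image_le (col_finite η (Rset_finite (m+1) 1)))
    rw [res_image η hsubm]
    exact hm
  have hdet : ∀ a b : ℤ × ℤ,
      (∀ i : ℤ, 0 ≤ i → i < (m : ℤ) → η ((i, 0) + a) = η ((i, 0) + b)) →
      η (((m : ℤ), 0) + a) = η (((m : ℤ), 0) + b) := by
    intro a b hab
    have hfa : (fun x : (Rset (m+1) 1 : Set (ℤ × ℤ)) => η ((x : ℤ × ℤ) + a)) ∈
        Col η (Rset (m+1) 1) := ⟨a, fun _ => rfl⟩
    have hfb : (fun x : (Rset (m+1) 1 : Set (ℤ × ℤ)) => η ((x : ℤ × ℤ) + b)) ∈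
        Col η (Rset (m+1) 1) := ⟨b, fun _ => rfl⟩
    have hres : res (A := A) hsubm (fun x => η ((x : ℤ × ℤ) + a)) =
        res (A := A) hsubm (fun x => η ((x : ℤ × ℤ) + b)) := by
      funext x
      obtain ⟨h1, h2, h3, h4⟩ := x.2
      show η ((x : ℤ × ℤ) + a) = η ((x : ℤ × ℤ) + b)
      have hx2 : (x : ℤ × ℤ).2 = 0 := by omega
      have hxeq : (x : ℤ × ℤ) = ((x : ℤ × ℤ).1, 0) := by
        rw [← hx2]
      rw [hxeq]
      exact hab _ h1 (by exact_mod_cast h2)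
    have := hinjm hfa hfb hres
    have hmem : (((m : ℤ), 0) : ℤ × ℤ) ∈ Rset (m+1) 1 := by
      refine ⟨by norm_num, ?_, by norm_num, by norm_num⟩
      show (m : ℤ) < ((m + 1 : ℕ) : ℤ)
      push_cast
      omega
    have := congrFun this ⟨((m : ℤ), 0), hmem⟩
    simpa using this
  -- Step 4 : complexity of two-row rectangles is bounded
  have step4 : ∀ n : ℕ, m ≤ n → colorCount η (Rset n 2) ≤ colorCount η (Rset m 2) := by
    intro n hmn
    have hsub2 : Rset m 2 ⊆ Rset n 2 := Rset_mono _ _ _ _ hmn le_rfl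
    have hinj2 : Set.InjOn (res (A := A) hsub2) (Col η (Rset n 2)) := by
      rintro f ⟨a, ha⟩ g ⟨b, hb⟩ hres
      have hab : ∀ p : ℤ × ℤ, p ∈ Rset m 2 → η (p + a) = η (p + b) := by
        intro p hp
        have := congrFun hres ⟨p, hp⟩
        show η (p + a) = η (p + b)
        have h1 := ha ⟨p, hsub2 hp⟩
        have h2 := hb ⟨p, hsub2 hp⟩
        simpa [res, h1, h2] using this
      have claim : ∀ t : ℕ, ∀ p : ℤ × ℤ, p ∈ Rset n 2 → p.1 = (t : ℤ) →
          η (p + a) = η (p + b) := by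
        intro t
        induction t using Nat.strong_induction_on with
        | _ t ih =>
          intro p hp hpt
          obtain ⟨h1, h2, h3, h4⟩ := hp
          by_cases htm : (t : ℤ) < (m : ℤ)
          · exact hab p ⟨h1, by omega, h3, h4⟩
          · push_neg at htm
            have key := hdet ((p.1 - m, p.2) + a) ((p.1 - m, p.2) + b) ?_
            · have he : ∀ c : ℤ × ℤ, ((m : ℤ), 0) + ((p.1 - m, p.2) + c) = p + c := by
                intro c
                have : (((m : ℤ), 0) : ℤ × ℤ) + (p.1 - m, p.2) = p := by
                  simp only [Prod.mk_add_mk]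
                  ext <;> simp <;> omega
                rw [← add_assoc, this]
              rwa [he a, he b] at key
            · intro i hi0 him
              have hq : ((i + (p.1 - m), p.2) : ℤ × ℤ) ∈ Rset n 2 := ⟨by omega, by omega, h3, h4⟩
              have hqt : (i + (p.1 - m)).toNat < t := by omega
              have := ih (i + (p.1 - m)).toNat hqt (i + (p.1 - m), p.2) hq (by omega)
              have he : ∀ c : ℤ × ℤ, ((i, 0) : ℤ × ℤ) + ((p.1 - m, p.2) + c) =
                  (i + (p.1 - m), p.2) + c := by
                intro c
                rw [← add_assoc]
                congr 1
                simp only [Prod.mk_add_mk]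
                ext <;> simp
              rwa [he a, he b]
      funext x
      obtain ⟨h1, h2, h3, h4⟩ := x.2
      have := claim (x : ℤ × ℤ).1.toNat (x : ℤ × ℤ) x.2 (by omega)
      rw [ha x, hb x]
      exact this
    rw [colorCount_eq (η := η) (S := Rset n 2), ← Set.ncard_image_of_injOn hinj2,
      res_image η hsub2]
    exact (colorCount_eq η (Rset m 2)).symm.le
  -- Step 5 : contradiction
  set n := m + colorCount η (Rset m 2) with hndef
  have h5 := hH n 2 (by omega) le_rfl
  have h6 := step4 n (by omega)
  have h7 : 1 ≤ colorCount η (Rset n 1) := colorCount_pos η (Rset_finite n 1)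
  omega

end Stmt7Aux
end S2

section S3
open Set
namespace Stmt7Aux

-- coordinate computations
lemma toR2_apply_zero (p : ℤ × ℤ) : toR2 p 0 = (p.1 : ℝ) := rfl
lemma toR2_apply_one (p : ℤ × ℤ) : toR2 p 1 = (p.2 : ℝ) := rfl

lemma inner_perp_e1 (y : ℤ × ℤ) : (inner ℝ (toR2 y) (perp e1) : ℝ) = -(y.2 : ℝ) := by
  simp only [PiLp.inner_apply, RCLike.inner_apply, conj_trivial, Fin.sum_univ_two]
  show (e1 1) * (y.1 : ℝ) + (-(e1 0)) * (y.2 : ℝ) = -(y.2 : ℝ)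
  show (0 : ℝ) * (y.1 : ℝ) + (-(1 : ℝ)) * (y.2 : ℝ) = -(y.2 : ℝ)
  ring

/-- the partially-eaten rectangle -/
def Tset (n k : ℕ) (a b : ℤ) : Set (ℤ × ℤ) :=
  {p : ℤ × ℤ | (1 ≤ p.2 ∧ p.2 ≤ (k : ℤ) - 1 ∧ 0 ≤ p.1 ∧ p.1 ≤ (n : ℤ) - 1) ∨
    (p.2 = 0 ∧ a ≤ p.1 ∧ p.1 ≤ b)}

def Eset (a b : ℤ) : Set (ℤ × ℤ) := {p : ℤ × ℤ | p.2 = 0 ∧ a ≤ p.1 ∧ p.1 ≤ b}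

variable {n k : ℕ} {a b : ℤ}

lemma Tset_subset_Rset (hk : 1 ≤ k) (ha : 0 ≤ a) (hb : b ≤ (n : ℤ) - 1) : Tset n k a b ⊆ Rset n k := by
  rintro ⟨x, y⟩ (⟨h1, h2, h3, h4⟩ | ⟨h1, h2, h3⟩) <;> exact ⟨by omega, by omega, by omega, by omega⟩

lemma Tset_finite (hk : 1 ≤ k) (ha : 0 ≤ a) (hb : b ≤ (n : ℤ) - 1) : (Tset n k a b).Finite :=
  (Rset_finite n k).subset (Tset_subset_Rset hk ha hb)

lemma Eset_subset_Tset : Eset a b ⊆ Tset n k a b := fun p hp => Or.inr hp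

lemma edge_Tset (hab : a ≤ b) : edgeSet e1 (Tset n k a b) = Eset a b := by
  ext x
  constructor
  · rintro ⟨hx, hmax⟩
    have hmem : ((a, 0) : ℤ × ℤ) ∈ Tset n k a b := Or.inr ⟨rfl, le_refl a, hab⟩
    have := hmax (a, 0) hmem
    rw [inner_perp_e1, inner_perp_e1] at this
    push_cast at this
    have hx2 : x.2 ≤ 0 := by exact_mod_cast (by linarith : (x.2 : ℝ) ≤ 0)
    rcases hx with ⟨h1, h2, h3, h4⟩ | ⟨h1, h2, h3⟩
    · omega
    · exact ⟨h1, h2, h3⟩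
  · rintro ⟨h1, h2, h3⟩
    refine ⟨Or.inr ⟨h1, h2, h3⟩, ?_⟩
    intro y hy
    rw [inner_perp_e1, inner_perp_e1, h1]
    have hy2 : 0 ≤ y.2 := by rcases hy with ⟨g1, _, _, _⟩ | ⟨g1, _, _⟩ <;> omega
    simp only [Int.cast_zero, neg_zero]
    have : (0 : ℝ) ≤ (y.2 : ℝ) := by exact_mod_cast hy2
    linarith

lemma Tset_diff_Eset : Tset n k a b \ Eset a b =
    {p : ℤ × ℤ | 1 ≤ p.2 ∧ p.2 ≤ (k : ℤ) - 1 ∧ 0 ≤ p.1 ∧ p.1 ≤ (n : ℤ) - 1} := by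
  ext ⟨x, y⟩
  simp only [Tset, Eset, Set.mem_diff, Set.mem_setOf_eq]
  constructor
  · rintro ⟨⟨h1, h2, h3, h4⟩ | ⟨h1, h2, h3⟩, hne⟩
    · exact ⟨h1, h2, h3, h4⟩
    · exact absurd ⟨h1, h2, h3⟩ hne
  · rintro ⟨h1, h2, h3, h4⟩
    exact ⟨Or.inl ⟨h1, h2, h3, h4⟩, fun ⟨g1, _, _⟩ => by omega⟩

lemma cc_Tset_diff_Eset {A : Type*} [Fintype A] (η : ℤ × ℤ → A) (hk : 1 ≤ k) :
    colorCount η (Tset n k a b \ Eset a b) = colorCount η (Rset n (k - 1)) := by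
  rw [Tset_diff_Eset]
  have himg : {p : ℤ × ℤ | 1 ≤ p.2 ∧ p.2 ≤ (k : ℤ) - 1 ∧ 0 ≤ p.1 ∧ p.1 ≤ (n : ℤ) - 1} =
      (fun x => x + ((0 : ℤ), (1 : ℤ))) '' Rset n (k - 1) := by
    ext ⟨x, y⟩
    simp only [Set.mem_setOf_eq, Set.mem_image]
    constructor
    · rintro ⟨h1, h2, h3, h4⟩
      refine ⟨(x, y - 1), ⟨(by omega : (0:ℤ) ≤ x), (by omega : x < ((n:ℕ) : ℤ)),
        (by omega : (0:ℤ) ≤ y - 1), (by omega : y - 1 < ((k - 1 : ℕ) : ℤ))⟩, ?_⟩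
      show (x, y - 1) + ((0 : ℤ), (1 : ℤ)) = (x, y)
      apply Prod.ext <;> simp
    · rintro ⟨⟨u, v⟩, ⟨h1, h2, h3, h4⟩, h5⟩
      have h6 : (u + 0, v + 1) = (x, y) := h5
      rw [Prod.ext_iff] at h6
      obtain ⟨h7, h8⟩ := h6
      simp only at h7 h8
      refine ⟨by omega, by omega, by omega, by omega⟩
  rw [himg, cc_translate]

lemma Eset_ncard (hab : a ≤ b) : (Eset a b).ncard = (b - a + 1).toNat := by
  have : Eset a b = (fun i => ((i : ℤ), (0 : ℤ))) '' Set.Icc a b := by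
    ext ⟨x, y⟩
    simp only [Eset, Set.mem_setOf_eq, Set.mem_image, Set.mem_Icc, Prod.ext_iff]
    constructor
    · rintro ⟨h1, h2, h3⟩; exact ⟨x, ⟨h2, h3⟩, rfl, h1.symm⟩
    · rintro ⟨i, ⟨h2, h3⟩, h4, h5⟩; exact ⟨h5.symm, by omega, by omega⟩
  rw [this, Set.ncard_image_of_injective _ (fun i j h => by simpa [Prod.ext_iff] using h),
    ← Finset.coe_Icc, Set.ncard_coe_finset, Int.card_Icc]
  congr 1
  ring

lemma snd_Tset (hn : 1 ≤ n) (hk : 2 ≤ k) (hab : a ≤ b) :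
    Prod.snd '' Tset n k a b = Set.Icc (0 : ℤ) ((k : ℤ) - 1) := by
  apply subset_antisymm
  · rintro y ⟨⟨px, py⟩, hp, rfl⟩
    rcases hp with ⟨h1, h2, _, _⟩ | ⟨h1, _, _⟩ <;> simp only [Set.mem_Icc] <;> omega
  · rintro y ⟨hy0, hy1⟩
    by_cases hy : y = 0
    · exact ⟨(a, 0), Or.inr ⟨rfl, le_refl a, hab⟩, by simp [hy]⟩
    · exact ⟨(0, y), Or.inl ⟨by omega, hy1, le_refl 0, by omega⟩, rfl⟩

lemma removal_left : Tset n k a b \ {((a : ℤ), (0 : ℤ))} = Tset n k (a + 1) b := by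
  ext ⟨x, y⟩
  simp only [Tset, Set.mem_diff, Set.mem_setOf_eq, Set.mem_singleton_iff, Prod.ext_iff]
  constructor
  · rintro ⟨⟨h1, h2, h3, h4⟩ | ⟨h1, h2, h3⟩, hne⟩
    · exact Or.inl ⟨h1, h2, h3, h4⟩
    · refine Or.inr ⟨h1, ?_, h3⟩
      rcases eq_or_lt_of_le h2 with heq | hlt
      · exact absurd ⟨heq.symm, h1⟩ hne
      · omega
  · rintro (⟨h1, h2, h3, h4⟩ | ⟨h1, h2, h3⟩)
    · exact ⟨Or.inl ⟨h1, h2, h3, h4⟩, fun ⟨_, hy⟩ => by omega⟩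
    · exact ⟨Or.inr ⟨h1, by omega, h3⟩, fun ⟨hx, _⟩ => by omega⟩

lemma removal_right : Tset n k a b \ {((b : ℤ), (0 : ℤ))} = Tset n k a (b - 1) := by
  ext ⟨x, y⟩
  simp only [Tset, Set.mem_diff, Set.mem_setOf_eq, Set.mem_singleton_iff, Prod.ext_iff]
  constructor
  · rintro ⟨⟨h1, h2, h3, h4⟩ | ⟨h1, h2, h3⟩, hne⟩
    · exact Or.inl ⟨h1, h2, h3, h4⟩
    · refine Or.inr ⟨h1, h2, ?_⟩
      rcases eq_or_lt_of_le h3 with heq | hlt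
      · exact absurd ⟨heq, h1⟩ hne
      · omega
  · rintro (⟨h1, h2, h3, h4⟩ | ⟨h1, h2, h3⟩)
    · exact ⟨Or.inl ⟨h1, h2, h3, h4⟩, fun ⟨_, hy⟩ => by omega⟩
    · exact ⟨Or.inr ⟨h1, h2, by omega⟩, fun ⟨hx, _⟩ => by omega⟩

-- linear functionals on R2
lemma isLin (c d : ℝ) : IsLinearMap ℝ (fun x : R2 => c * x 0 + d * x 1) := by
  constructor
  · intro x y
    simp only [PiLp.add_apply]
    ring
  · intro t x
    simp only [PiLp.smul_apply, smul_eq_mul]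
    ring

lemma hull_le_halfspace_ge (S : Set (ℤ × ℤ)) (c d r : ℝ)
    (h : ∀ p ∈ S, r ≤ c * (p.1 : ℝ) + d * (p.2 : ℝ)) :
    convexHull ℝ (toR2 '' S) ⊆ {x : R2 | r ≤ c * x 0 + d * x 1} := by
  apply convexHull_min
  · rintro _ ⟨p, hp, rfl⟩
    exact h p hp
  · exact convex_halfSpace_ge (isLin c d) r

lemma hull_le_halfspace_le (S : Set (ℤ × ℤ)) (c d r : ℝ)
    (h : ∀ p ∈ S, c * (p.1 : ℝ) + d * (p.2 : ℝ) ≤ r) :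
    convexHull ℝ (toR2 '' S) ⊆ {x : R2 | c * x 0 + d * x 1 ≤ r} := by
  apply convexHull_min
  · rintro _ ⟨p, hp, rfl⟩
    exact h p hp
  · exact convex_halfSpace_le (isLin c d) r

lemma Tset_latticeConvex (hn : 1 ≤ n) (hk : 2 ≤ k) (ha : 0 ≤ a) (hab : a ≤ b)
    (hb : b ≤ (n : ℤ) - 1) : IsLatticeConvex (Tset n k a b) := by
  intro p hp
  have h1 : (0 : ℝ) ≤ (p.1 : ℝ) := by
    have hh := hull_le_halfspace_ge (Tset n k a b) 1 0 0 ?_ hp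
    · simpa [toR2_apply_zero, toR2_apply_one] using hh
    · rintro ⟨x, y⟩ (⟨g1, g2, g3, g4⟩ | ⟨g1, g2, g3⟩) <;>
        show (0 : ℝ) ≤ 1 * (x : ℝ) + 0 * (y : ℝ)
      · have : (0:ℝ) ≤ (x:ℝ) := by exact_mod_cast g3
        linarith
      · have : (0:ℝ) ≤ (x:ℝ) := by exact_mod_cast le_trans ha g2
        linarith
  have h2 : (p.1 : ℝ) ≤ (n : ℝ) - 1 := by
    have hh := hull_le_halfspace_le (Tset n k a b) 1 0 ((n : ℝ) - 1) ?_ hp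
    · simpa [toR2_apply_zero, toR2_apply_one] using hh
    · rintro ⟨x, y⟩ (⟨g1, g2, g3, g4⟩ | ⟨g1, g2, g3⟩) <;>
        show 1 * (x : ℝ) + 0 * (y : ℝ) ≤ (n : ℝ) - 1
      · have : ((x:ℤ):ℝ) ≤ (((n:ℤ) - 1 : ℤ):ℝ) := by exact_mod_cast g4
        push_cast at this
        linarith
      · have g4 : x ≤ (n:ℤ) - 1 := by omega
        have : ((x:ℤ):ℝ) ≤ (((n:ℤ) - 1 : ℤ):ℝ) := by exact_mod_cast g4
        push_cast at this
        linarith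
  have h3 : (0 : ℝ) ≤ (p.2 : ℝ) := by
    have hh := hull_le_halfspace_ge (Tset n k a b) 0 1 0 ?_ hp
    · simpa [toR2_apply_zero, toR2_apply_one] using hh
    · rintro ⟨x, y⟩ (⟨g1, g2, g3, g4⟩ | ⟨g1, g2, g3⟩) <;>
        show (0 : ℝ) ≤ 0 * (x : ℝ) + 1 * (y : ℝ)
      · have : (0:ℝ) ≤ (y:ℝ) := by exact_mod_cast (by omega : (0:ℤ) ≤ y)
        linarith
      · have : (0:ℝ) ≤ (y:ℝ) := by exact_mod_cast (by omega : (0:ℤ) ≤ y)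
        linarith
  have h4 : (p.2 : ℝ) ≤ (k : ℝ) - 1 := by
    have hh := hull_le_halfspace_le (Tset n k a b) 0 1 ((k : ℝ) - 1) ?_ hp
    · simpa [toR2_apply_zero, toR2_apply_one] using hh
    · rintro ⟨x, y⟩ (⟨g1, g2, g3, g4⟩ | ⟨g1, g2, g3⟩) <;>
        show 0 * (x : ℝ) + 1 * (y : ℝ) ≤ (k : ℝ) - 1
      · have : ((y:ℤ):ℝ) ≤ (((k:ℤ) - 1 : ℤ):ℝ) := by exact_mod_cast g2
        push_cast at this
        linarith
      · have g2' : y ≤ (k:ℤ) - 1 := by omega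
        have : ((y:ℤ):ℝ) ≤ (((k:ℤ) - 1 : ℤ):ℝ) := by exact_mod_cast g2'
        push_cast at this
        linarith
  have h5 : (a : ℝ) ≤ (p.1 : ℝ) + (a : ℝ) * (p.2 : ℝ) := by
    have hh := hull_le_halfspace_ge (Tset n k a b) 1 (a : ℝ) (a : ℝ) ?_ hp
    · simp only [Set.mem_setOf_eq, toR2_apply_zero, toR2_apply_one, one_mul] at hh
      linarith
    · rintro ⟨x, y⟩ (⟨g1, g2, g3, g4⟩ | ⟨g1, g2, g3⟩) <;>
        show (a : ℝ) ≤ 1 * (x : ℝ) + (a : ℝ) * (y : ℝ)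
      · have hx : (0 : ℝ) ≤ (x : ℝ) := by exact_mod_cast g3
        have hy : (1 : ℝ) ≤ (y : ℝ) := by exact_mod_cast g1
        have haR : (0 : ℝ) ≤ (a : ℝ) := by exact_mod_cast ha
        nlinarith
      · have hx : (a : ℝ) ≤ (x : ℝ) := by exact_mod_cast g2
        have hy : (y : ℝ) = 0 := by exact_mod_cast g1
        rw [hy]
        linarith
  have h6 : -(b : ℝ) ≤ -(p.1 : ℝ) + ((n : ℝ) - 1 - (b : ℝ)) * (p.2 : ℝ) := by
    have hh := hull_le_halfspace_ge (Tset n k a b) (-1) ((n : ℝ) - 1 - (b : ℝ)) (-(b : ℝ)) ?_ hp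
    · simp only [Set.mem_setOf_eq, toR2_apply_zero, toR2_apply_one, neg_one_mul] at hh
      linarith
    · rintro ⟨x, y⟩ (⟨g1, g2, g3, g4⟩ | ⟨g1, g2, g3⟩) <;>
        show -(b : ℝ) ≤ (-1) * (x : ℝ) + ((n : ℝ) - 1 - (b : ℝ)) * (y : ℝ)
      · have hx : (x:ℝ) ≤ (n:ℝ) - 1 := by
          have : ((x:ℤ):ℝ) ≤ (((n:ℤ) - 1 : ℤ):ℝ) := by exact_mod_cast g4
          push_cast at this
          linarith
        have hy : (1 : ℝ) ≤ (y : ℝ) := by exact_mod_cast g1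
        have hbR : (0 : ℝ) ≤ (n : ℝ) - 1 - (b : ℝ) := by
          have : ((0:ℤ):ℝ) ≤ (((n:ℤ) - 1 - b : ℤ):ℝ) := by exact_mod_cast (by omega : (0:ℤ) ≤ (n:ℤ) - 1 - b)
          push_cast at this
          linarith
        nlinarith
      · have hx : (x : ℝ) ≤ (b : ℝ) := by exact_mod_cast g3
        have hy : (y : ℝ) = 0 := by exact_mod_cast g1
        rw [hy]
        linarith
  have i1 : 0 ≤ p.1 := by exact_mod_cast h1
  have i2 : p.1 ≤ (n : ℤ) - 1 := by
    have : ((p.1:ℤ):ℝ) ≤ (((n:ℤ) - 1 : ℤ):ℝ) := by push_cast; linarith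
    exact_mod_cast this
  have i3 : 0 ≤ p.2 := by exact_mod_cast h3
  have i4 : p.2 ≤ (k : ℤ) - 1 := by
    have : ((p.2:ℤ):ℝ) ≤ (((k:ℤ) - 1 : ℤ):ℝ) := by push_cast; linarith
    exact_mod_cast this
  by_cases hp2 : p.2 = 0
  · have i5 : a ≤ p.1 := by
      have : ((a:ℤ):ℝ) ≤ ((p.1:ℤ):ℝ) := by
        rw [hp2] at h5
        push_cast at h5
        linarith
      exact_mod_cast this
    have i6 : p.1 ≤ b := by
      have : ((p.1:ℤ):ℝ) ≤ ((b:ℤ):ℝ) := by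
        rw [hp2] at h6
        push_cast at h6
        linarith
      exact_mod_cast this
    exact Or.inr ⟨hp2, i5, i6⟩
  · exact Or.inl ⟨by omega, i4, i1, i2⟩

lemma endpoint_Tset (hab : a ≤ b) (hx : IsEndpoint e1 (Tset n k a b) x) :
    x = ((a : ℤ), (0 : ℤ)) ∨ x = ((b : ℤ), (0 : ℤ)) := by
  obtain ⟨hxe, hxh⟩ := hx
  rw [edge_Tset hab] at hxe hxh
  obtain ⟨hx2, hxa, hxb⟩ := hxe
  by_contra hcon
  push_neg at hcon
  obtain ⟨hna, hnb⟩ := hcon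
  have hxa' : a < x.1 := by
    rcases eq_or_lt_of_le hxa with heq | h
    · exact absurd (Prod.ext heq.symm hx2) hna
    · exact h
  have hxb' : x.1 < b := by
    rcases eq_or_lt_of_le hxb with heq | h
    · exact absurd (Prod.ext heq hx2) hnb
    · exact h
  apply hxh
  have hmema : ((a, 0) : ℤ × ℤ) ∈ Eset a b \ {x} := by
    refine ⟨⟨rfl, le_refl a, hab⟩, ?_⟩
    simp only [Set.mem_singleton_iff]
    intro hcon'
    rw [← hcon'] at hxa'
    simp at hxa'
  have hmemb : ((b, 0) : ℤ × ℤ) ∈ Eset a b \ {x} := by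
    refine ⟨⟨rfl, hab, le_refl b⟩, ?_⟩
    simp only [Set.mem_singleton_iff]
    intro hcon'
    rw [← hcon'] at hxb'
    simp at hxb'
  set t : ℝ := ((x.1 : ℝ) - (a : ℝ)) / ((b : ℝ) - (a : ℝ)) with ht
  have hba : (0 : ℝ) < (b : ℝ) - (a : ℝ) := by
    have : (a : ℝ) < (b : ℝ) := by exact_mod_cast lt_of_lt_of_le hxa' hxb'.le
    linarith
  have ht0 : 0 ≤ t := by
    apply div_nonneg _ hba.le
    have : (a : ℝ) ≤ (x.1 : ℝ) := by exact_mod_cast hxa'.le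
    linarith
  have ht1 : t ≤ 1 := by
    rw [div_le_one hba]
    have : (x.1 : ℝ) ≤ (b : ℝ) := by exact_mod_cast hxb'.le
    linarith
  have hseg : toR2 x ∈ segment ℝ (toR2 (a, 0)) (toR2 (b, 0)) := by
    refine ⟨1 - t, t, by linarith, ht0, by ring, ?_⟩
    ext j
    fin_cases j
    · show (1 - t) * (a : ℝ) + t * (b : ℝ) = (x.1 : ℝ)
      have htb : t * ((b : ℝ) - (a : ℝ)) = (x.1 : ℝ) - (a : ℝ) := by
        rw [ht]; exact div_mul_cancel₀ _ hba.ne'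
      linarith
    · show (1 - t) * ((0 : ℤ) : ℝ) + t * ((0 : ℤ) : ℝ) = (x.2 : ℝ)
      rw [hx2]
      simp
  have hma : toR2 (a, 0) ∈ toR2 '' (Eset a b \ {x}) := ⟨(a, 0), hmema, rfl⟩
  have hmb : toR2 (b, 0) ∈ toR2 '' (Eset a b \ {x}) := ⟨(b, 0), hmemb, rfl⟩
  exact (convex_convexHull ℝ _).segment_subset
    (subset_convexHull ℝ _ hma) (subset_convexHull ℝ _ hmb) hseg

lemma toR2_eq_line (x : ℤ × ℤ) (w : R2) :
    (∃ c : ℝ, toR2 x = w + c • e1) ↔ (x.2 : ℝ) = w 1 := by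
  constructor
  · rintro ⟨c, hc⟩
    have := congrArg (fun z : R2 => z 1) hc
    simpa [toR2_apply_one, PiLp.add_apply, PiLp.smul_apply, e1] using this
  · intro h
    refine ⟨(x.1 : ℝ) - w 0, ?_⟩
    ext j
    fin_cases j
    · show (x.1 : ℝ) = w 0 + ((x.1 : ℝ) - w 0) * _
      show (x.1 : ℝ) = w 0 + ((x.1 : ℝ) - w 0) * (1 : ℝ)
      ring
    · show (x.2 : ℝ) = w 1 + ((x.1 : ℝ) - w 0) * (0 : ℝ)
      rw [h]
      ring

end Stmt7Aux
end S3

section S4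
open Set
namespace Stmt7Aux
variable {A : Type*} [Fintype A]

lemma Eset_singleton (a : ℤ) : Eset a a = {((a : ℤ), (0 : ℤ))} := by
  ext ⟨x, y⟩
  simp only [Eset, Set.mem_setOf_eq, Set.mem_singleton_iff, Prod.ext_iff]
  constructor
  · rintro ⟨h1, h2, h3⟩; exact ⟨by omega, h1⟩
  · rintro ⟨h1, h2⟩; exact ⟨h2, by omega, by omega⟩

lemma mem_Tset_left (hab : a ≤ b) : ((a : ℤ), (0 : ℤ)) ∈ Tset n k a b :=
  Or.inr ⟨rfl, le_refl a, hab⟩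

lemma mem_Tset_right (hab : a ≤ b) : ((b : ℤ), (0 : ℤ)) ∈ Tset n k a b :=
  Or.inr ⟨rfl, hab, le_refl b⟩

lemma descent (η : ℤ × ℤ → A) (n k : ℕ) (hn : 1 ≤ n) (hk : 2 ≤ k) :
    ∀ d : ℕ, ∀ a b : ℤ, 0 ≤ a → a ≤ b → b ≤ (n : ℤ) - 1 → (b - a).toNat = d →
    colorCount η (Tset n k a b) < colorCount η (Rset n (k - 1)) + (b - a + 1).toNat →
    ∃ S : Set (ℤ × ℤ), IsBalanced η e1 S ∧ Prod.snd '' S = Set.Icc (0 : ℤ) ((k : ℤ) - 1) := by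
  intro d
  induction d using Nat.strong_induction_on with
  | _ d ih =>
    intro a b ha hab hb hd hinv
    have hk1 : 1 ≤ k := by omega
    have hTfin : (Tset n k a b).Finite := Tset_finite hk1 ha hb
    have hedge : edgeSet e1 (Tset n k a b) = Eset a b := edge_Tset hab
    -- building a balanced set when both endpoints are generated
    have hbuild : IsGenerated η (Tset n k a b) (a, 0) → IsGenerated η (Tset n k a b) (b, 0) →
        ∃ S : Set (ℤ × ℤ), IsBalanced η e1 S ∧
          Prod.snd '' S = Set.Icc (0 : ℤ) ((k : ℤ) - 1) := by
      intro hga hgb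
      refine ⟨Tset n k a b, ⟨hTfin, Tset_latticeConvex hn hk ha hab hb, ?_, ?_, ?_, ?_⟩,
        snd_Tset hn hk hab⟩
      · -- S ≠ edgeSet
        intro heq
        have h01 : ((0 : ℤ), (1 : ℤ)) ∈ Tset n k a b :=
          Or.inl ⟨le_refl 1, by omega, le_refl 0, by omega⟩
        rw [heq, hedge] at h01
        have : (1 : ℤ) = 0 := h01.1
        omega
      · -- endpoints generated
        intro x hx
        rcases endpoint_Tset hab hx with rfl | rfl
        · exact hga
        · exact hgb
      · -- counting
        rw [hedge, cc_Tset_diff_Eset η hk1, Eset_ncard hab]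
        exact hinv
      · -- lines
        intro w hne
        rw [hedge, Eset_ncard hab]
        obtain ⟨x₀, hx₀T, hx₀c⟩ := hne
        have hx₀l : ((x₀.2 : ℝ)) = w 1 := (toR2_eq_line x₀ w).1 hx₀c
        have hSlfin : ({x ∈ Tset n k a b | ∃ c : ℝ, toR2 x = w + c • e1}).Finite :=
          hTfin.subset (fun x hx => hx.1)
        rcases hx₀T with ⟨g1, g2, g3, g4⟩ | ⟨g1, g2, g3⟩
        · -- interior row : inject the edge into the slice
          have himg : (fun p : ℤ × ℤ => (p.1, x₀.2)) '' Eset a b ⊆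
              {x ∈ Tset n k a b | ∃ c : ℝ, toR2 x = w + c • e1} := by
            rintro _ ⟨p, ⟨hp1, hp2, hp3⟩, rfl⟩
            refine ⟨Or.inl ⟨g1, g2, (by omega : (0:ℤ) ≤ p.1), (by omega : p.1 ≤ (n:ℤ) - 1)⟩, ?_⟩
            apply (toR2_eq_line _ w).2
            exact hx₀l
          have hinjOn : Set.InjOn (fun p : ℤ × ℤ => (p.1, x₀.2)) (Eset a b) := by
            rintro p hp q hq hpq
            have h1 : p.1 = q.1 := (Prod.ext_iff.1 hpq).1
            have : p.2 = q.2 := by rw [hp.1, hq.1]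
            exact Prod.ext h1 this
          calc (b - a + 1).toNat = (Eset a b).ncard := (Eset_ncard hab).symm
            _ = ((fun p : ℤ × ℤ => (p.1, x₀.2)) '' Eset a b).ncard :=
                (Set.ncard_image_of_injOn hinjOn).symm
            _ ≤ ({x ∈ Tset n k a b | ∃ c : ℝ, toR2 x = w + c • e1}).ncard :=
                Set.ncard_le_ncard himg hSlfin
            _ ≤ _ := Nat.le_succ _
        · -- bottom row : the edge is contained in the slice
          have himg : Eset a b ⊆ {x ∈ Tset n k a b | ∃ c : ℝ, toR2 x = w + c • e1} := by
            rintro p hp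
            refine ⟨Eset_subset_Tset hp, (toR2_eq_line _ w).2 ?_⟩
            rw [hp.1, ← hx₀l, g1]
          calc (b - a + 1).toNat = (Eset a b).ncard := (Eset_ncard hab).symm
            _ ≤ ({x ∈ Tset n k a b | ∃ c : ℝ, toR2 x = w + c • e1}).ncard :=
                Set.ncard_le_ncard himg hSlfin
            _ ≤ _ := Nat.le_succ _
    by_cases hga : IsGenerated η (Tset n k a b) (a, 0)
    · by_cases hgb : IsGenerated η (Tset n k a b) (b, 0)
      · exact hbuild hga hgb
      · -- remove (b,0)
        have hne : a ≠ b := by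
          rintro rfl
          apply hgb
          apply generated_of_le η hTfin (mem_Tset_left le_rfl)
          have hE : Tset n k a a \ {((a : ℤ), (0 : ℤ))} = Tset n k a a \ Eset a a := by
            rw [Eset_singleton]
          rw [hE, cc_Tset_diff_Eset η hk1]
          have : (a - a + 1).toNat = 1 := by omega
          omega
        have hlt := lt_of_not_generated η hTfin (mem_Tset_right hab) hgb
        rw [removal_right] at hlt
        have hd' : (b - 1 - a).toNat < d := by omega
        apply ih _ hd' a (b - 1) ha (by omega) (by omega) rfl
        have h1 : (b - a + 1).toNat = (b - 1 - a + 1).toNat + 1 := by omega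
        omega
    · -- remove (a,0)
      have hne : a ≠ b := by
        rintro rfl
        apply hga
        apply generated_of_le η hTfin (mem_Tset_left le_rfl)
        have hE : Tset n k a a \ {((a : ℤ), (0 : ℤ))} = Tset n k a a \ Eset a a := by
          rw [Eset_singleton]
        rw [hE, cc_Tset_diff_Eset η hk1]
        have : (a - a + 1).toNat = 1 := by omega
        omega
      have hlt := lt_of_not_generated η hTfin (mem_Tset_left hab) hga
      rw [removal_left] at hlt
      have hd' : (b - (a + 1)).toNat < d := by omega
      apply ih _ hd' (a + 1) b (by omega) (by omega) hb rfl
      have h1 : (b - a + 1).toNat = (b - (a + 1) + 1).toNat + 1 := by omega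
      omega

lemma Tset_full (hn : 1 ≤ n) (hk : 2 ≤ k) : Tset n k 0 ((n : ℤ) - 1) = Rset n k := by
  ext ⟨x, y⟩
  simp only [Tset, Rset, Set.mem_setOf_eq]
  omega

lemma exists_balanced_e1 (η : ℤ × ℤ → A) (n k : ℕ) (hn : 1 ≤ n) (hk : 2 ≤ k)
    (hA : colorCount η (Rset n k) < colorCount η (Rset n (k - 1)) + n) :
    ∃ S : Set (ℤ × ℤ), IsBalanced η e1 S ∧ Prod.snd '' S = Set.Icc (0 : ℤ) ((k : ℤ) - 1) := by
  apply descent η n k hn hk ((n : ℤ) - 1 - 0).toNat 0 ((n : ℤ) - 1) le_rfl (by omega)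
    le_rfl rfl
  rw [Tset_full hn hk]
  have : ((n : ℤ) - 1 - 0 + 1).toNat = n := by omega
  omega

end Stmt7Aux
end S4

section S5
open Set
namespace Stmt7Aux
variable {A : Type*} [Fintype A]

lemma coloring_img (η : ℤ × ℤ → A) (L Li : ℤ × ℤ → ℤ × ℤ)
    (hLadd : ∀ p q, L (p + q) = L p + L q) (hLi : ∀ p, Li (L p) = p)
    (hLi' : ∀ p, L (Li p) = p) (U : Set (ℤ × ℤ)) (g : ℤ × ℤ → A) :
    IsColoring η (L '' U) g ↔ IsColoring (fun p => η (L p)) U (fun p => g (L p)) := by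
  constructor
  · rintro ⟨m, hm⟩
    refine ⟨Li m, fun x hx => ?_⟩
    show g (L x) = η (L (x + Li m))
    rw [hLadd, hLi']
    exact hm (L x) (Set.mem_image_of_mem L hx)
  · rintro ⟨m', hm'⟩
    refine ⟨L m', fun y hy => ?_⟩
    obtain ⟨x, hx, rfl⟩ := hy
    rw [← hLadd]
    exact hm' x hx

lemma gen_img (η : ℤ × ℤ → A) (L Li : ℤ × ℤ → ℤ × ℤ)
    (hLadd : ∀ p q, L (p + q) = L p + L q) (hLi : ∀ p, Li (L p) = p)
    (hLi' : ∀ p, L (Li p) = p) (S : Set (ℤ × ℤ)) (q : ℤ × ℤ)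
    (hgen : IsGenerated (fun p => η (L p)) S q) : IsGenerated η (L '' S) (L q) := by
  have hLinj : Function.Injective L := Function.LeftInverse.injective hLi
  have hset : L '' S \ {L q} = L '' (S \ {q}) := by
    rw [Set.image_diff hLinj, Set.image_singleton]
  intro f hf
  rw [hset] at hf
  obtain ⟨n, hn⟩ := hf
  constructor
  · exact ⟨fun y => η (y + n), ⟨n, fun _ _ => rfl⟩, fun y hy => by rw [hset] at hy; exact (hn y hy).symm⟩
  · intro g g' hg hg' hgf hg'f y hy
    have hfc : IsColoring (fun p => η (L p)) (S \ {q}) (fun p => f (L p)) := by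
      rw [← coloring_img η L Li hLadd hLi hLi']
      exact ⟨n, hn⟩
    have hGc := (coloring_img η L Li hLadd hLi hLi' S g).1 hg
    have hG'c := (coloring_img η L Li hLadd hLi hLi' S g').1 hg'
    have hagree : ∀ x ∈ S \ {q}, g (L x) = f (L x) := by
      intro x hx
      apply hgf
      rw [hset]
      exact Set.mem_image_of_mem L hx
    have hagree' : ∀ x ∈ S \ {q}, g' (L x) = f (L x) := by
      intro x hx
      apply hg'f
      rw [hset]
      exact Set.mem_image_of_mem L hx
    have := (hgen (fun p => f (L p)) hfc).2 _ _ hGc hG'c hagree hagree'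
    obtain ⟨x, hx, rfl⟩ := hy
    exact this x hx

lemma edge_img (L : ℤ × ℤ → ℤ × ℤ) (v : R2) (S : Set (ℤ × ℤ))
    (hLinj : Function.Injective L)
    (hφ : ∀ y : ℤ × ℤ, (inner ℝ (toR2 (L y)) (perp v) : ℝ) = inner ℝ (toR2 y) (perp e1)) :
    edgeSet v (L '' S) = L '' edgeSet e1 S := by
  ext x
  constructor
  · rintro ⟨⟨q, hq, rfl⟩, hmax⟩
    refine ⟨q, ⟨hq, fun r hr => ?_⟩, rfl⟩
    have := hmax (L r) (Set.mem_image_of_mem L hr)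
    rw [hφ, hφ] at this
    exact this
  · rintro ⟨q, ⟨hq, hmax⟩, rfl⟩
    refine ⟨Set.mem_image_of_mem L hq, ?_⟩
    rintro y ⟨r, hr, rfl⟩
    rw [hφ, hφ]
    exact hmax r hr

lemma balanced_transfer (η : ℤ × ℤ → A) (L Li : ℤ × ℤ → ℤ × ℤ) (M Mi : R2 → R2) (v : R2)
    (hLadd : ∀ p q, L (p + q) = L p + L q) (hLi : ∀ p, Li (L p) = p)
    (hLi' : ∀ p, L (Li p) = p)
    (hM : ∀ p, toR2 (L p) = M (toR2 p))
    (hMlin : IsLinearMap ℝ M)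
    (hMi : ∀ x, Mi (M x) = x) (hMi' : ∀ x, M (Mi x) = x)
    (hφ : ∀ y : ℤ × ℤ, (inner ℝ (toR2 (L y)) (perp v) : ℝ) = inner ℝ (toR2 y) (perp e1))
    (ε : ℝ) (hε0 : ε ≠ 0) (hεv : M (ε • e1) = v)
    (S : Set (ℤ × ℤ)) (hbal : IsBalanced (fun p => η (L p)) e1 S) :
    IsBalanced η v (L '' S) := by
  obtain ⟨hfin, hconv, hne, hgen, hcount, hline⟩ := hbal
  have hLinj : Function.Injective L := Function.LeftInverse.injective hLi
  have hMinj : Function.Injective M := Function.LeftInverse.injective hMi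
  have himgR2 : ∀ U : Set (ℤ × ℤ), toR2 '' (L '' U) = M '' (toR2 '' U) := by
    intro U
    rw [Set.image_image, Set.image_image]
    exact Set.image_congr' hM
  have hedge : edgeSet v (L '' S) = L '' edgeSet e1 S := edge_img L v S hLinj hφ
  have hccS : colorCount η (L '' S) = colorCount (fun p => η (L p)) S := by
    apply cc_equivariant η S L Li hLinj (fun p => ⟨L p, hLi p⟩)
    intro p q
    rw [hLadd, hLi']
  have hccD : colorCount η (L '' S \ edgeSet v (L '' S)) =
      colorCount (fun p => η (L p)) (S \ edgeSet e1 S) := by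
    rw [hedge, ← Set.image_diff hLinj]
    apply cc_equivariant η _ L Li hLinj (fun p => ⟨L p, hLi p⟩)
    intro p q
    rw [hLadd, hLi']
  refine ⟨hfin.image L, ?_, ?_, ?_, ?_, ?_⟩
  · -- lattice convex
    intro p hp
    rw [himgR2, ← hMlin.image_convexHull] at hp
    obtain ⟨z, hz, hzp⟩ := hp
    have hz2 : z = toR2 (Li p) := by
      have h1 : M (toR2 (Li p)) = toR2 p := by rw [← hM, hLi']
      have h2 : M z = M (toR2 (Li p)) := by rw [hzp, h1]
      exact hMinj h2
    rw [hz2] at hz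
    have := hconv (Li p) hz
    exact ⟨Li p, this, hLi' p⟩
  · -- S ≠ edge
    intro heq
    apply hne
    rw [hedge] at heq
    exact (Set.image_injective.2 hLinj) heq
  · -- endpoints
    intro x hx
    obtain ⟨hxe, hxh⟩ := hx
    rw [hedge] at hxe hxh
    obtain ⟨q, hq, rfl⟩ := hxe
    have hend : IsEndpoint e1 S q := by
      refine ⟨hq, fun hcon => ?_⟩
      apply hxh
      have h1 : M (toR2 q) ∈ M '' convexHull ℝ (toR2 '' (edgeSet e1 S \ {q})) :=
        Set.mem_image_of_mem M hcon
      rw [hMlin.image_convexHull, ← himgR2, Set.image_diff hLinj, Set.image_singleton] at h1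
      rw [hM]
      exact h1
    exact gen_img η L Li hLadd hLi hLi' S q (hgen q hend)
  · -- counting
    rw [hccS, hccD, hedge, Set.ncard_image_of_injective _ hLinj]
    exact hcount
  · -- lines
    intro w hne'
    have hkey : ∀ x : ℤ × ℤ, (∃ c : ℝ, toR2 (L x) = w + c • v) ↔
        (∃ c' : ℝ, toR2 x = Mi w + c' • e1) := by
      intro x
      constructor
      · rintro ⟨c, hc⟩
        refine ⟨c * ε, ?_⟩
        apply hMinj
        rw [← hM, hc]
        rw [hMlin.map_add, hMi']
        congr 1
        rw [hMlin.map_smul, ← hεv, hMlin.map_smul, smul_smul]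
      · rintro ⟨c', hc'⟩
        refine ⟨c' / ε, ?_⟩
        rw [hM, hc']
        rw [hMlin.map_add, hMi']
        congr 1
        rw [hMlin.map_smul, ← hεv, hMlin.map_smul, smul_smul]
        congr 1
        field_simp
    have hsl : {x ∈ L '' S | ∃ c : ℝ, toR2 x = w + c • v} =
        L '' {q ∈ S | ∃ c : ℝ, toR2 q = Mi w + c • e1} := by
      ext x
      constructor
      · rintro ⟨⟨q, hq, rfl⟩, hc⟩
        exact ⟨q, ⟨hq, (hkey q).1 hc⟩, rfl⟩
      · rintro ⟨q, ⟨hq, hc⟩, rfl⟩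
        exact ⟨Set.mem_image_of_mem L hq, (hkey q).2 hc⟩
    rw [hsl, hedge, Set.ncard_image_of_injective _ hLinj, Set.ncard_image_of_injective _ hLinj]
    apply hline (Mi w)
    rw [hsl] at hne'
    obtain ⟨_, ⟨q, hq, rfl⟩⟩ := hne'
    exact ⟨q, hq⟩

end Stmt7Aux
end S5

section S6
open Set
noncomputable section
namespace Stmt7Aux
variable {A : Type*} [Fintype A]

def Lflip (p : ℤ × ℤ) : ℤ × ℤ := (p.1, -p.2)
def Lrot (p : ℤ × ℤ) : ℤ × ℤ := (-p.2, p.1)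
def Lroti (p : ℤ × ℤ) : ℤ × ℤ := (p.2, -p.1)
def Lswap (p : ℤ × ℤ) : ℤ × ℤ := (p.2, p.1)

def Mflip (x : R2) : R2 := (WithLp.equiv 2 (Fin 2 → ℝ)).symm ![x 0, -(x 1)]
def Mrot (x : R2) : R2 := (WithLp.equiv 2 (Fin 2 → ℝ)).symm ![-(x 1), x 0]
def Mroti (x : R2) : R2 := (WithLp.equiv 2 (Fin 2 → ℝ)).symm ![x 1, -(x 0)]
def Mswap (x : R2) : R2 := (WithLp.equiv 2 (Fin 2 → ℝ)).symm ![x 1, x 0]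

lemma inner_perp_eval (x : ℤ × ℤ) (w : R2) :
    (inner ℝ (toR2 x) (perp w) : ℝ) = (x.1 : ℝ) * w 1 + (x.2 : ℝ) * (-(w 0)) := by
  simp only [PiLp.inner_apply, RCLike.inner_apply, conj_trivial, Fin.sum_univ_two]
  show w 1 * (x.1 : ℝ) + (-(w 0)) * (x.2 : ℝ) = _
  ring

-- flip properties
lemma Lflip_add : ∀ p q, Lflip (p + q) = Lflip p + Lflip q := by
  intro p q; simp [Lflip, Prod.ext_iff]; ring
lemma Lflip_inv : ∀ p, Lflip (Lflip p) = p := by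
  intro p; simp [Lflip]
lemma Mflip_flip : ∀ x, Mflip (Mflip x) = x := by
  intro x; ext j; fin_cases j <;> simp [Mflip]
lemma hM_flip : ∀ p, toR2 (Lflip p) = Mflip (toR2 p) := by
  intro p; ext j; fin_cases j <;> simp [Mflip, toR2, Lflip]
lemma Mflip_lin : IsLinearMap ℝ Mflip := by
  constructor
  · intro x y; ext j; fin_cases j <;> simp [Mflip] <;> ring
  · intro c x; ext j; fin_cases j <;> simp [Mflip] <;> ring
lemma hphi_flip : ∀ y : ℤ × ℤ, (inner ℝ (toR2 (Lflip y)) (perp (-e1)) : ℝ) =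
    inner ℝ (toR2 y) (perp e1) := by
  intro y
  rw [inner_perp_eval, inner_perp_eval]
  show ((Lflip y).1 : ℝ) * (-e1) 1 + ((Lflip y).2 : ℝ) * (-((-e1) 0)) =
    (y.1 : ℝ) * e1 1 + (y.2 : ℝ) * (-(e1 0))
  have h0 : ((-e1 : R2)) 0 = -1 := by simp [e1]
  have h1 : ((-e1 : R2)) 1 = 0 := by simp [e1]
  have h2 : (e1 : R2) 0 = 1 := rfl
  have h3 : (e1 : R2) 1 = 0 := rfl
  rw [h0, h1, h2, h3]
  show ((y.1 : ℤ) : ℝ) * 0 + (((-y.2 : ℤ)) : ℝ) * (-(-1)) = (y.1 : ℝ) * 0 + (y.2 : ℝ) * (-1)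
  push_cast
  ring
lemma heps_flip : Mflip ((-1 : ℝ) • e1) = -e1 := by
  ext j; fin_cases j <;> simp [Mflip, e1]

-- rot properties
lemma Lrot_add : ∀ p q, Lrot (p + q) = Lrot p + Lrot q := by
  intro p q; simp [Lrot, Prod.ext_iff]; ring
lemma Lrot_inv : ∀ p, Lroti (Lrot p) = p := by
  intro p; simp [Lrot, Lroti]
lemma Lrot_inv' : ∀ p, Lrot (Lroti p) = p := by
  intro p; simp [Lrot, Lroti]
lemma Mrot_inv : ∀ x, Mroti (Mrot x) = x := by
  intro x; ext j; fin_cases j <;> simp [Mrot, Mroti]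
lemma Mrot_inv' : ∀ x, Mrot (Mroti x) = x := by
  intro x; ext j; fin_cases j <;> simp [Mrot, Mroti]
lemma hM_rot : ∀ p, toR2 (Lrot p) = Mrot (toR2 p) := by
  intro p; ext j; fin_cases j <;> simp [Mrot, toR2, Lrot]
lemma Mrot_lin : IsLinearMap ℝ Mrot := by
  constructor
  · intro x y; ext j; fin_cases j <;> simp [Mrot] <;> ring
  · intro c x; ext j; fin_cases j <;> simp [Mrot] <;> ring
lemma hphi_rot : ∀ y : ℤ × ℤ, (inner ℝ (toR2 (Lrot y)) (perp e2) : ℝ) =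
    inner ℝ (toR2 y) (perp e1) := by
  intro y
  rw [inner_perp_eval, inner_perp_eval]
  show ((Lrot y).1 : ℝ) * (e2 : R2) 1 + ((Lrot y).2 : ℝ) * (-((e2 : R2) 0)) =
    (y.1 : ℝ) * (e1 : R2) 1 + (y.2 : ℝ) * (-((e1 : R2) 0))
  have h0 : (e2 : R2) 0 = 0 := rfl
  have h1 : (e2 : R2) 1 = 1 := rfl
  have h2 : (e1 : R2) 0 = 1 := rfl
  have h3 : (e1 : R2) 1 = 0 := rfl
  rw [h0, h1, h2, h3]
  show (((-y.2 : ℤ)) : ℝ) * 1 + ((y.1 : ℤ) : ℝ) * (-0) = (y.1 : ℝ) * 0 + (y.2 : ℝ) * (-1)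
  push_cast
  ring
lemma heps_rot : Mrot ((1 : ℝ) • e1) = e2 := by
  ext j; fin_cases j <;> simp [Mrot, e1, e2]

-- swap properties
lemma Lswap_add : ∀ p q, Lswap (p + q) = Lswap p + Lswap q := by
  intro p q; simp [Lswap, Prod.ext_iff]
lemma Lswap_inv : ∀ p, Lswap (Lswap p) = p := by
  intro p; simp [Lswap]
lemma Mswap_inv : ∀ x, Mswap (Mswap x) = x := by
  intro x; ext j; fin_cases j <;> simp [Mswap]
lemma hM_swap : ∀ p, toR2 (Lswap p) = Mswap (toR2 p) := by
  intro p; ext j; fin_cases j <;> simp [Mswap, toR2, Lswap]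
lemma Mswap_lin : IsLinearMap ℝ Mswap := by
  constructor
  · intro x y; ext j; fin_cases j <;> simp [Mswap]
  · intro c x; ext j; fin_cases j <;> simp [Mswap]
lemma hphi_swap : ∀ y : ℤ × ℤ, (inner ℝ (toR2 (Lswap y)) (perp (-e2)) : ℝ) =
    inner ℝ (toR2 y) (perp e1) := by
  intro y
  rw [inner_perp_eval, inner_perp_eval]
  show ((Lswap y).1 : ℝ) * ((-e2 : R2)) 1 + ((Lswap y).2 : ℝ) * (-((-e2 : R2) 0)) =
    (y.1 : ℝ) * (e1 : R2) 1 + (y.2 : ℝ) * (-((e1 : R2) 0))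
  have h0 : ((-e2 : R2)) 0 = 0 := by simp [e2]
  have h1 : ((-e2 : R2)) 1 = -1 := by simp [e2]
  have h2 : (e1 : R2) 0 = 1 := rfl
  have h3 : (e1 : R2) 1 = 0 := rfl
  rw [h0, h1, h2, h3]
  show ((y.2 : ℤ) : ℝ) * (-1) + ((y.1 : ℤ) : ℝ) * (-0) = (y.1 : ℝ) * 0 + (y.2 : ℝ) * (-1)
  push_cast
  ring
lemma heps_swap : Mswap ((-1 : ℝ) • e1) = -e2 := by
  ext j; fin_cases j <;> simp [Mswap, e1, e2]

-- complexity of rectangles under the transforms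
lemma cc_flip (η : ℤ × ℤ → A) (n k : ℕ) (hk : 1 ≤ k) :
    colorCount (fun p => η (Lflip p)) (Rset n k) = colorCount η (Rset n k) := by
  have h1 := cc_equivariant η (Rset n k) Lflip Lflip
    (Function.LeftInverse.injective Lflip_inv) (fun p => ⟨Lflip p, Lflip_inv p⟩)
    (fun p q => by rw [Lflip_add, Lflip_inv])
  have h1' : colorCount (fun p => η (Lflip p)) (Rset n k) =
      colorCount η (Lflip '' (Rset n k)) := h1.symm
  rw [h1']
  have h2 : Lflip '' Rset n k = (fun q => q + ((0 : ℤ), -((k : ℤ) - 1))) '' Rset n k := by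
    ext ⟨u, v⟩
    simp only [Set.mem_image]
    constructor
    · rintro ⟨⟨x, y⟩, ⟨r1, r2, r3, r4⟩, heq⟩
      simp only [Lflip, Prod.ext_iff] at heq
      obtain ⟨e1', e2'⟩ := heq
      refine ⟨(u, v + ((k : ℤ) - 1)), ⟨by omega, by omega, by omega, by omega⟩, ?_⟩
      show (u, v + ((k : ℤ) - 1)) + ((0 : ℤ), -((k : ℤ) - 1)) = (u, v)
      apply Prod.ext <;> simp <;> ring
    · rintro ⟨⟨x, y⟩, ⟨r1, r2, r3, r4⟩, heq⟩
      have heq' : (x + 0, y + -((k : ℤ) - 1)) = (u, v) := heq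
      rw [Prod.ext_iff] at heq'
      simp only at heq'
      obtain ⟨e1', e2'⟩ := heq'
      refine ⟨(x, -y + (k : ℤ) - 1), ⟨by omega, by omega, by omega, by omega⟩, ?_⟩
      show ((x : ℤ), -(-y + (k : ℤ) - 1)) = (u, v)
      apply Prod.ext <;> simp <;> omega
  rw [h2, cc_translate]

lemma cc_rot (η : ℤ × ℤ → A) (a b : ℕ) (hb : 1 ≤ b) :
    colorCount (fun p => η (Lrot p)) (Rset a b) = colorCount η (Rset b a) := by
  have h1 := cc_equivariant η (Rset a b) Lrot Lroti
    (Function.LeftInverse.injective Lrot_inv) (fun p => ⟨Lrot p, Lrot_inv p⟩)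
    (fun p q => by rw [Lrot_add, Lrot_inv'])
  have h1' : colorCount (fun p => η (Lrot p)) (Rset a b) =
      colorCount η (Lrot '' (Rset a b)) := h1.symm
  rw [h1']
  have h2 : Lrot '' Rset a b = (fun q => q + (-((b : ℤ) - 1), (0 : ℤ))) '' Rset b a := by
    ext ⟨u, v⟩
    simp only [Set.mem_image]
    constructor
    · rintro ⟨⟨x, y⟩, ⟨r1, r2, r3, r4⟩, heq⟩
      simp only [Lrot, Prod.ext_iff] at heq
      obtain ⟨e1', e2'⟩ := heq
      refine ⟨(u + ((b : ℤ) - 1), v), ⟨by omega, by omega, by omega, by omega⟩, ?_⟩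
      show (u + ((b : ℤ) - 1), v) + (-((b : ℤ) - 1), (0 : ℤ)) = (u, v)
      apply Prod.ext <;> simp <;> ring
    · rintro ⟨⟨x, y⟩, ⟨r1, r2, r3, r4⟩, heq⟩
      have heq' : (x + -((b : ℤ) - 1), y + 0) = (u, v) := heq
      rw [Prod.ext_iff] at heq'
      simp only at heq'
      obtain ⟨e1', e2'⟩ := heq'
      refine ⟨(y, -x + (b : ℤ) - 1), ⟨by omega, by omega, by omega, by omega⟩, ?_⟩
      show (-(-x + (b : ℤ) - 1), (y : ℤ)) = (u, v)
      apply Prod.ext <;> simp <;> omega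
  rw [h2, cc_translate]

lemma cc_swap (η : ℤ × ℤ → A) (a b : ℕ) :
    colorCount (fun p => η (Lswap p)) (Rset a b) = colorCount η (Rset b a) := by
  have h1 := cc_equivariant η (Rset a b) Lswap Lswap
    (Function.LeftInverse.injective Lswap_inv) (fun p => ⟨Lswap p, Lswap_inv p⟩)
    (fun p q => by rw [Lswap_add, Lswap_inv])
  have h1' : colorCount (fun p => η (Lswap p)) (Rset a b) =
      colorCount η (Lswap '' (Rset a b)) := h1.symm
  rw [h1']
  have h2 : Lswap '' Rset a b = Rset b a := by
    ext ⟨u, v⟩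
    simp only [Set.mem_image]
    constructor
    · rintro ⟨⟨x, y⟩, ⟨r1, r2, r3, r4⟩, heq⟩
      simp only [Lswap, Prod.ext_iff] at heq
      obtain ⟨e1', e2'⟩ := heq
      exact ⟨by omega, by omega, by omega, by omega⟩
    · rintro ⟨r1, r2, r3, r4⟩
      exact ⟨(v, u), ⟨r3, r4, r1, r2⟩, rfl⟩
  rw [h2]

end Stmt7Aux
end
end S6

end
end Stmt7AuxSection

open Stmt7Aux in
/-- existence of balanced sets in the four axis directions. -/
theorem stmt7 {A : Type*} [Fintype A] (η : ℤ × ℤ → A) (n₁ k₁ : ℕ)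
    (hn₁ : 0 < n₁) (hk₁ : 0 < k₁) (hP : Prect η n₁ k₁ ≤ n₁ * k₁) :
    (∃ S : Set (ℤ × ℤ), IsBalanced η e1 S) ∧
    (∃ S : Set (ℤ × ℤ), IsBalanced η (-e1) S) ∧
    (∃ S : Set (ℤ × ℤ), IsBalanced η e2 S) ∧
    (∃ S : Set (ℤ × ℤ), IsBalanced η (-e2) S) ∧
    (∃ S S' : Set (ℤ × ℤ), IsBalanced η e1 S ∧ IsBalanced η (-e1) S' ∧
      (Prod.snd '' S).ncard = (Prod.snd '' S').ncard) ∧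
    (∃ S S' : Set (ℤ × ℤ), IsBalanced η e2 S ∧ IsBalanced η (-e2) S' ∧
      (Prod.fst '' S).ncard = (Prod.fst '' S').ncard) := by
  
  have hP' : colorCount η (Rset n₁ k₁) ≤ n₁ * k₁ := hP
  obtain ⟨n, k, hn, hk, hA⟩ := caseA η n₁ k₁ hn₁ hk₁ hP'
  obtain ⟨S1, hS1, hS1h⟩ := exists_balanced_e1 η n k hn hk hA
  have hAf : colorCount (fun p => η (Lflip p)) (Rset n k) <
      colorCount (fun p => η (Lflip p)) (Rset n (k - 1)) + n := by
    rw [cc_flip η n k (by omega), cc_flip η n (k - 1) (by omega)]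
    exact hA
  obtain ⟨S2₀, hS2₀, hS2h⟩ := exists_balanced_e1 (fun p => η (Lflip p)) n k hn hk hAf
  have hS2 : IsBalanced η (-e1) (Lflip '' S2₀) :=
    balanced_transfer η Lflip Lflip Mflip Mflip (-e1) Lflip_add Lflip_inv Lflip_inv
      hM_flip Mflip_lin Mflip_flip Mflip_flip hphi_flip (-1) (by norm_num) heps_flip S2₀ hS2₀
  have hProt : colorCount (fun p => η (Lrot p)) (Rset k₁ n₁) ≤ k₁ * n₁ := by
    rw [cc_rot η k₁ n₁ hn₁]
    calc colorCount η (Rset n₁ k₁) ≤ n₁ * k₁ := hP'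
      _ = k₁ * n₁ := Nat.mul_comm _ _
  obtain ⟨N, K, hN, hK, hA2⟩ := caseA (fun p => η (Lrot p)) k₁ n₁ hk₁ hn₁ hProt
  obtain ⟨S3₀, hS3₀, hS3h⟩ := exists_balanced_e1 (fun p => η (Lrot p)) N K hN hK hA2
  have hS3 : IsBalanced η e2 (Lrot '' S3₀) :=
    balanced_transfer η Lrot Lroti Mrot Mroti e2 Lrot_add Lrot_inv Lrot_inv'
      hM_rot Mrot_lin Mrot_inv Mrot_inv' hphi_rot 1 one_ne_zero heps_rot S3₀ hS3₀
  have hAs : colorCount (fun p => η (Lswap p)) (Rset N K) <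
      colorCount (fun p => η (Lswap p)) (Rset N (K - 1)) + N := by
    rw [cc_swap η N K, cc_swap η N (K - 1)]
    rw [cc_rot η N K (by omega), cc_rot η N (K - 1) (by omega)] at hA2
    exact hA2
  obtain ⟨S4₀, hS4₀, hS4h⟩ := exists_balanced_e1 (fun p => η (Lswap p)) N K hN hK hAs
  have hS4 : IsBalanced η (-e2) (Lswap '' S4₀) :=
    balanced_transfer η Lswap Lswap Mswap Mswap (-e2) Lswap_add Lswap_inv Lswap_inv
      hM_swap Mswap_lin Mswap_inv Mswap_inv hphi_swap (-1) (by norm_num) heps_swap S4₀ hS4₀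
  have hsnd2 : Prod.snd '' (Lflip '' S2₀) = (fun y : ℤ => -y) '' (Prod.snd '' S2₀) := by
    rw [Set.image_image, Set.image_image]
    rfl
  have hheq : (Prod.snd '' S1).ncard = (Prod.snd '' (Lflip '' S2₀)).ncard := by
    rw [hsnd2, Set.ncard_image_of_injective _ neg_injective, hS1h, hS2h]
  have hfst3 : Prod.fst '' (Lrot '' S3₀) = (fun y : ℤ => -y) '' (Prod.snd '' S3₀) := by
    rw [Set.image_image, Set.image_image]
    rfl
  have hfst4 : Prod.fst '' (Lswap '' S4₀) = Prod.snd '' S4₀ := by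
    rw [Set.image_image]
    rfl
  have hweq : (Prod.fst '' (Lrot '' S3₀)).ncard = (Prod.fst '' (Lswap '' S4₀)).ncard := by
    rw [hfst3, hfst4, Set.ncard_image_of_injective _ neg_injective, hS3h, hS4h]
  exact ⟨⟨S1, hS1⟩, ⟨_, hS2⟩, ⟨_, hS3⟩, ⟨_, hS4⟩,
    ⟨S1, _, hS1, hS2, hheq⟩, ⟨_, _, hS3, hS4, hweq⟩⟩
end

section
/- Let 𝒜 be a finite alphabet, a ∈ ℤ, i a positive integer, and f : {a, a+1, …, a+i−1} → 𝒜. Suppose there exists a positive integer n₀ with P_f(n₀) ≤ n₀ and i > 3n₀. Then there exists an integer p with 1 ≤ p ≤ n₀ such that f(x + p) = f(x) for every integer x with a + n₀ ≤ x and x + p ≤ a + i − n₀. -/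
open Filter Set

section MHaux

variable {A : Type*} [Fintype A] (f : ℤ → A) (a R : ℤ)

/-- The words of length `n` occurring in `f` at positions in `[a, R]`. -/
def MHwords (n : ℕ) : Set (Fin n → A) :=
  {w | ∃ m : ℤ, a ≤ m ∧ m ≤ R ∧ ∀ j : Fin n, w j = f (m + (j : ℕ))}

/-- Every length-`n` word occurring at a position in `[a, R]` extends uniquely. -/
def MHgood (n : ℕ) : Prop :=
  ∀ m m' : ℤ, a ≤ m → m ≤ R → a ≤ m' → m' ≤ R →
    (∀ j : ℕ, j < n → f (m + j) = f (m' + j)) → f (m + n) = f (m' + n)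

lemma MHwords_zero (h : a ≤ R) : (MHwords f a R 0).ncard = 1 := by
  have : MHwords f a R 0 = {fun j : Fin 0 => f (a + (j : ℕ))} := by
    ext w
    simp only [MHwords, Set.mem_setOf_eq, Set.mem_singleton_iff]
    constructor
    · intro _; exact funext fun j => j.elim0
    · intro _; exact ⟨a, le_refl a, h, fun j => j.elim0⟩
  rw [this, Set.ncard_singleton]

lemma MHbad_step {n : ℕ} (hbad : ¬ MHgood f a R n) :
    (MHwords f a R n).ncard + 1 ≤ (MHwords f a R (n + 1)).ncard := by
  simp only [MHgood, not_forall] at hbad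
  obtain ⟨m, m', h1, h2, h3, h4, h5, h6⟩ := hbad
  set π : (Fin (n + 1) → A) → (Fin n → A) := fun w j => w j.castSucc with hπ
  set w1 : Fin (n + 1) → A := fun j => f (m + (j : ℕ)) with hw1
  set w2 : Fin (n + 1) → A := fun j => f (m' + (j : ℕ)) with hw2
  have hw1mem : w1 ∈ MHwords f a R (n + 1) := ⟨m, h1, h2, fun j => rfl⟩
  have hw2mem : w2 ∈ MHwords f a R (n + 1) := ⟨m', h3, h4, fun j => rfl⟩
  have hne : w2 ≠ w1 := by
    intro h
    apply h6
    have := congrFun h (Fin.last n)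
    simpa [hw1, hw2] using this.symm
  have hπeq : π w2 = π w1 := by
    funext j
    simp only [hπ, hw1, hw2]
    have hcs : ((j.castSucc : Fin (n+1)) : ℕ) = (j : ℕ) := rfl
    rw [hcs]
    exact (h5 j j.isLt).symm
  have hsub : MHwords f a R n ⊆ π '' (MHwords f a R (n + 1)) := by
    rintro w ⟨m0, hm1, hm2, hm3⟩
    refine ⟨fun j => f (m0 + (j : ℕ)), ⟨m0, hm1, hm2, fun j => rfl⟩, ?_⟩
    funext j
    simp only [hπ]
    rw [hm3 j, Fin.coe_castSucc]
  have himg : π '' (MHwords f a R (n + 1)) ⊆ π '' (MHwords f a R (n + 1) \ {w1}) := by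
    rintro _ ⟨w, hw, rfl⟩
    by_cases hc : w = w1
    · exact ⟨w2, ⟨hw2mem, hne⟩, by rw [hπeq, hc]⟩
    · exact ⟨w, ⟨hw, hc⟩, rfl⟩
  calc (MHwords f a R n).ncard + 1
      ≤ (π '' (MHwords f a R (n + 1) \ {w1})).ncard + 1 :=
        Nat.add_le_add_right (Set.ncard_le_ncard (hsub.trans himg) (Set.toFinite _)) 1
    _ ≤ (MHwords f a R (n + 1) \ {w1}).ncard + 1 :=
        Nat.add_le_add_right (Set.ncard_image_le (Set.toFinite _)) 1
    _ = (MHwords f a R (n + 1)).ncard :=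
        Set.ncard_diff_singleton_add_one hw1mem (Set.toFinite _)

lemma MHexists_good (n₀ : ℕ) (h : (MHwords f a R n₀).ncard ≤ n₀) (haR : a ≤ R) :
    ∃ n < n₀, MHgood f a R n := by
  by_contra hc
  push_neg at hc
  have key : ∀ k, k ≤ n₀ → k + 1 ≤ (MHwords f a R k).ncard := by
    intro k
    induction k with
    | zero => intro _; rw [MHwords_zero f a R haR]
    | succ k ih =>
      intro hk
      have h1 := MHbad_step f a R (hc k (by omega))
      have h2 := ih (by omega)
      omega
  have := key n₀ le_rfl
  omega

end MHaux

theorem MHmain {A : Type*} [Fintype A] (f : ℤ → A) (a : ℤ) (i n₀ : ℕ)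
    (hn₀ : 0 < n₀) (hbig : 3 * n₀ < i)
    (hQ : (MHwords f a (a + (i : ℤ) - (n₀ : ℤ)) n₀).ncard ≤ n₀) :
    ∃ p : ℕ, 1 ≤ p ∧ p ≤ n₀ ∧
      ∀ x : ℤ, a + (n₀ : ℤ) ≤ x → x + (p : ℤ) ≤ a + (i : ℤ) - (n₀ : ℤ) →
        f (x + (p : ℤ)) = f x := by
  obtain ⟨R, hR⟩ : ∃ R : ℤ, R = a + (i : ℤ) - (n₀ : ℤ) := ⟨_, rfl⟩
  rw [← hR] at hQ ⊢
  have haR : a ≤ R := by omega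
  -- find a good length n < n₀
  obtain ⟨n, hnlt, hgood⟩ := MHexists_good f a R n₀ hQ haR
  -- pigeonhole: two equal n₀-windows at positions in [a, a+n₀]
  have hfin := Set.toFinite (MHwords f a R n₀)
  obtain ⟨g, hg⟩ : ∃ g : Fin (n₀ + 1) → Fin n₀ → A,
      g = fun (k : Fin (n₀ + 1)) (j : Fin n₀) => f (a + ((k : ℕ) : ℤ) + ((j : ℕ) : ℤ)) := ⟨_, rfl⟩
  have hmaps : ∀ k : Fin (n₀ + 1), g k ∈ hfin.toFinset := by
    intro k
    rw [Set.Finite.mem_toFinset]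
    refine ⟨a + ((k : ℕ) : ℤ), by omega, ?_, fun j => by rw [hg]⟩
    have := k.isLt
    omega
  have hcard : hfin.toFinset.card < (Finset.univ : Finset (Fin (n₀ + 1))).card := by
    rw [← Set.ncard_eq_toFinset_card _ hfin, Finset.card_univ, Fintype.card_fin]
    omega
  obtain ⟨k1, -, k2, -, hkne, hkeq⟩ :=
    Finset.exists_ne_map_eq_of_card_lt_of_maps_to hcard (fun k _ => hmaps k)
  -- wlog k1 < k2
  obtain ⟨k1, k2, hklt, hkeq⟩ : ∃ k1 k2 : Fin (n₀ + 1), (k1 : ℕ) < (k2 : ℕ) ∧ g k1 = g k2 := by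
    rcases hkne.lt_or_gt with h | h
    · exact ⟨k1, k2, h, hkeq⟩
    · exact ⟨k2, k1, h, hkeq.symm⟩
  obtain ⟨p, hp⟩ : ∃ p : ℕ, p = (k2 : ℕ) - (k1 : ℕ) := ⟨_, rfl⟩
  obtain ⟨m1, hm1⟩ : ∃ m1 : ℤ, m1 = a + ((k1 : ℕ) : ℤ) := ⟨_, rfl⟩
  have hk2le : (k2 : ℕ) ≤ n₀ := by have := k2.isLt; omega
  have hppos : 1 ≤ p := by omega
  have hple : p ≤ n₀ := by omega
  -- initial block of periodicity
  have hper0 : ∀ j : ℤ, 0 ≤ j → j < (n₀ : ℤ) → f (m1 + j) = f (m1 + p + j) := by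
    intro j hj0 hjn
    have hjlt : j.toNat < n₀ := by omega
    have hj := congrFun hkeq ⟨j.toNat, hjlt⟩
    rw [hg] at hj
    calc f (m1 + j) = f (a + ((k1 : ℕ) : ℤ) + ((⟨j.toNat, hjlt⟩ : Fin n₀) : ℕ)) := by
          congr 1; simp; omega
      _ = f (a + ((k2 : ℕ) : ℤ) + ((⟨j.toNat, hjlt⟩ : Fin n₀) : ℕ)) := hj
      _ = f (m1 + p + j) := by congr 1; simp; omega
  -- propagation by strong induction
  have claim : ∀ k : ℕ, ∀ x : ℤ, x = m1 + k → x + (p : ℤ) ≤ R → f (x + (p : ℤ)) = f x := by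
    intro k
    induction k using Nat.strong_induction_on with
    | _ k ih =>
      intro x hx hxb
      by_cases hcase : k < n₀
      · have h0 := hper0 k (by omega) (by omega)
        calc f (x + (p : ℤ)) = f (m1 + p + k) := by congr 1; omega
          _ = f (m1 + k) := (h0).symm
          _ = f x := by congr 1; omega
      · -- k ≥ n₀ > n
        have hagree : ∀ j : ℕ, j < n → f (x - n + p + j) = f (x - n + j) := by
          intro j hj
          have hlt : k - n + j < k := by omega
          have hih := ih (k - n + j) hlt (x - n + j) (by omega) (by omega)
          calc f (x - n + p + j) = f (x - (n : ℤ) + j + p) := by congr 1; ring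
            _ = f (x - n + j) := hih
        have hmain := hgood (x - n + p) (x - n) (by omega) (by omega) (by omega) (by omega)
          hagree
        calc f (x + (p : ℤ)) = f (x - n + p + n) := by congr 1; ring
          _ = f (x - (n : ℤ) + n) := hmain
          _ = f x := by congr 1; ring
  refine ⟨p, hppos, hple, ?_⟩
  intro x hx1 hx2
  have hm1x : m1 ≤ x := by have := k1.isLt; omega
  exact claim (x - m1).toNat x (by omega) (by omega)


/-- the finite Morse–Hedlund theorem. -/
theorem stmt8 {A : Type*} [Fintype A] (f : ℤ → A) (a : ℤ) (i n₀ : ℕ)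
    (hi : 0 < i) (hn₀ : 0 < n₀)
    (hP : Set.ncard {w : Fin n₀ → A | ∃ m : ℤ, a ≤ m ∧ m + (n₀ : ℤ) ≤ a + (i : ℤ) ∧
        ∀ j : Fin n₀, w j = f (m + ((j : ℕ) : ℤ))} ≤ n₀)
    (hbig : 3 * n₀ < i) :
    ∃ p : ℕ, 1 ≤ p ∧ p ≤ n₀ ∧
      ∀ x : ℤ, a + (n₀ : ℤ) ≤ x → x + (p : ℤ) ≤ a + (i : ℤ) - (n₀ : ℤ) →
        f (x + (p : ℤ)) = f x := by
  refine MHmain f a i n₀ hn₀ hbig (le_trans (le_of_eq ?_) hP)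
  congr 1
  ext w
  simp only [MHwords, Set.mem_setOf_eq, le_sub_iff_add_le]
end
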